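/- arXiv:1907.02759 — 12 statements merged into one kernel-verified Lean document; each statement's English description precedes it below -/
import Mathlib

section
/- Let F : U ⊆ ℝⁿ → ℝᵐ (m ≥ n ≥ 2) be continuously differentiable on a convex open set U, with F'(x) ≥ 0 entrywise for all x ∈ U, and satisfying the convexity inequality F(y) − F(x) ≥ F'(x)(y−x) pointwise for all x, y ∈ U. Let L > 0 and suppose x ∈ U satisfies max_{k=1,…,m} eₖᵀ F'(x)(eⱼ − eⱼ') ≥ L⁻¹ for all j ∈ {1,…,n}, where eⱼ is the j-th unit vector and eⱼ' = 𝟙 − eⱼ. Then the matrix F'(x) ∈ ℝ^{m×n} is injective, and its left inverse satisfies ‖F'(x)⁻¹‖_∞ ≤ L. -/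
open Matrix Set

theorem stmt_0 (n m : ℕ) (hn : 2 ≤ n) (hnm : n ≤ m)
    (U : Set (Fin n → ℝ)) (hUopen : IsOpen U) (hUconv : Convex ℝ U)
    (F : (Fin n → ℝ) → (Fin m → ℝ))
    (F' : (Fin n → ℝ) → Matrix (Fin m) (Fin n) ℝ)
    (hderiv : ∀ x ∈ U, HasFDerivAt F ((F' x).mulVecLin.toContinuousLinearMap) x)
    (hcont : ContinuousOn F' U)
    (hmono : ∀ x ∈ U, ∀ k j, 0 ≤ F' x k j)
    (hconv : ∀ x ∈ U, ∀ y ∈ U, (F' x).mulVec (y - x) ≤ F y - F x)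
    (L : ℝ) (hL : 0 < L)
    (x : Fin n → ℝ) (hx : x ∈ U)
    (hcrit : ∀ j : Fin n,
      L⁻¹ ≤ ⨆ k, ((F' x).mulVec (fun i => if i = j then 1 else -1)) k) :
    Function.Injective ((F' x).mulVec) ∧
    ∀ d : Fin n → ℝ, L⁻¹ * ‖d‖ ≤ ‖(F' x).mulVec d‖ := by
  set A := F' x with hA
  have hpos : ∀ k j, 0 ≤ A k j := hmono x hx
  haveI : Nonempty (Fin n) := ⟨⟨0, by omega⟩⟩
  haveI : Nonempty (Fin m) := ⟨⟨0, by omega⟩⟩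
  have key : ∀ (d : Fin n → ℝ) (j : Fin n), (∀ i, |d i| ≤ d j) →
      L⁻¹ * d j ≤ ‖A.mulVec d‖ := by
    intro d j hj
    have hdj : 0 ≤ d j := le_trans (abs_nonneg _) (hj j)
    obtain ⟨k, hk⟩ := exists_eq_ciSup_of_finite
      (f := fun k => (A.mulVec (fun i => if i = j then 1 else -1)) k)
    have hk' : L⁻¹ ≤ (A.mulVec (fun i => if i = j then 1 else -1)) k := hk ▸ hcrit j
    have h1 : d j * (A.mulVec (fun i => if i = j then 1 else -1)) k ≤ (A.mulVec d) k := by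
      simp only [Matrix.mulVec, dotProduct]
      rw [Finset.mul_sum]
      apply Finset.sum_le_sum
      intro i _
      by_cases hij : i = j
      · simp [hij, mul_comm]
      · simp only [hij, if_false]
        have h2 : -(d j) ≤ d i := neg_le_of_abs_le (hj i)
        nlinarith [hpos k i]
    have h3 : L⁻¹ * d j ≤ (A.mulVec d) k := by nlinarith
    calc L⁻¹ * d j ≤ (A.mulVec d) k := h3
      _ ≤ |(A.mulVec d) k| := le_abs_self _
      _ ≤ ‖A.mulVec d‖ := by
          simpa using norm_le_pi_norm (A.mulVec d) k
  have main : ∀ d, L⁻¹ * ‖d‖ ≤ ‖A.mulVec d‖ := by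
    intro d
    obtain ⟨j, hjmax⟩ := Finite.exists_max (fun i => |d i|)
    have hdn : ‖d‖ ≤ |d j| := by
      apply (pi_norm_le_iff_of_nonneg (abs_nonneg _)).2
      intro i; simpa using hjmax i
    rcases le_or_gt 0 (d j) with h | h
    · have hall : ∀ i, |d i| ≤ d j := fun i => (hjmax i).trans (le_of_eq (abs_of_nonneg h))
      calc L⁻¹ * ‖d‖ ≤ L⁻¹ * (d j) := by
            apply mul_le_mul_of_nonneg_left _ (by positivity)
            exact hdn.trans (le_of_eq (abs_of_nonneg h))
        _ ≤ ‖A.mulVec d‖ := key d j hall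
    · have h1 : ∀ i, |(-d) i| ≤ (-d) j := by
        intro i
        simp only [Pi.neg_apply, abs_neg]
        exact (hjmax i).trans (le_of_eq (abs_of_neg h))
      have h2 := key (-d) j h1
      rw [Matrix.mulVec_neg, norm_neg] at h2
      calc L⁻¹ * ‖d‖ ≤ L⁻¹ * ((-d) j) := by
            apply mul_le_mul_of_nonneg_left _ (by positivity)
            simpa [abs_of_neg h] using hdn
        _ ≤ ‖A.mulVec d‖ := h2
  refine ⟨?_, main⟩
  intro d1 d2 heq
  have h0 : A.mulVec (d1 - d2) = 0 := by rw [Matrix.mulVec_sub, heq, sub_self]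
  have hm := main (d1 - d2)
  rw [h0, norm_zero] at hm
  have hle : ‖d1 - d2‖ ≤ 0 := by nlinarith [norm_nonneg (d1 - d2), inv_pos.2 hL]
  exact sub_eq_zero.mp (norm_le_zero_iff.mp hle)
end

section
/- Let F : U ⊆ ℝⁿ → ℝᵐ (m ≥ n ≥ 2) be continuously differentiable, pointwise monotonic (F'(x) ≥ 0 entrywise) and pointwise convex (F(y) − F(x) ≥ F'(x)(y−x)) on a convex open set U, and let L > 0. If both x, y ∈ U satisfy max_{k=1,…,m} eₖᵀ F'(z)(eⱼ − eⱼ') ≥ L⁻¹ for all j ∈ {1,…,n} (with z = x and z = y), then ‖x − y‖_∞ ≤ L ‖F(x) − F(y)‖_∞. -/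
open Matrix Set

lemma aux_key {m n : ℕ} [NeZero m] (M : Matrix (Fin m) (Fin n) ℝ)
    (hM : ∀ k i, 0 ≤ M k i) (d : Fin n → ℝ) (w : Fin m → ℝ)
    (hdw : M.mulVec d ≤ w) (j : Fin n) (hj : d j = ‖d‖)
    (L : ℝ) (hL : 0 < L)
    (hcrit : L⁻¹ ≤ ⨆ k, (M.mulVec (fun i => if i = j then 1 else -1)) k) :
    ‖d‖ ≤ L * ‖w‖ := by
  obtain ⟨k₀, hk₀⟩ := exists_eq_ciSup_of_finite
    (f := fun k => (M.mulVec (fun i => if i = j then 1 else -1)) k)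
  have h1 : L⁻¹ ≤ (M.mulVec (fun i => if i = j then 1 else -1)) k₀ := hk₀ ▸ hcrit
  have h2 : ‖d‖ * (M.mulVec (fun i => if i = j then 1 else -1)) k₀ ≤ w k₀ := by
    refine le_trans ?_ (hdw k₀)
    simp only [Matrix.mulVec, dotProduct]
    rw [Finset.mul_sum]
    apply Finset.sum_le_sum
    intro i _
    by_cases hij : i = j
    · subst hij; simp [hj, mul_comm]
    · simp only [hij, if_false, mul_neg_one]
      have hdi : -‖d‖ ≤ d i := by
        have := norm_le_pi_norm d i
        rw [Real.norm_eq_abs] at this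
        linarith [neg_abs_le (d i)]
      nlinarith [hM k₀ i]
  have h3 : ‖d‖ * L⁻¹ ≤ ‖w‖ := by
    calc ‖d‖ * L⁻¹ ≤ ‖d‖ * (M.mulVec (fun i => if i = j then 1 else -1)) k₀ :=
          mul_le_mul_of_nonneg_left h1 (norm_nonneg d)
      _ ≤ w k₀ := h2
      _ ≤ ‖w‖ := by
          have := norm_le_pi_norm w k₀
          rw [Real.norm_eq_abs] at this
          linarith [le_abs_self (w k₀)]
  rw [← div_eq_mul_inv] at h3
  rw [div_le_iff₀ hL] at h3
  linarith [mul_comm L ‖w‖ ▸ h3]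

theorem stmt_1 (n m : ℕ) (hn : 2 ≤ n) (hnm : n ≤ m)
    (U : Set (Fin n → ℝ)) (hUopen : IsOpen U) (hUconv : Convex ℝ U)
    (F : (Fin n → ℝ) → (Fin m → ℝ))
    (F' : (Fin n → ℝ) → Matrix (Fin m) (Fin n) ℝ)
    (hderiv : ∀ z ∈ U, HasFDerivAt F ((F' z).mulVecLin.toContinuousLinearMap) z)
    (hcont : ContinuousOn F' U)
    (hmono : ∀ z ∈ U, ∀ k j, 0 ≤ F' z k j)
    (hconv : ∀ z ∈ U, ∀ w ∈ U, (F' z).mulVec (w - z) ≤ F w - F z)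
    (L : ℝ) (hL : 0 < L)
    (x : Fin n → ℝ) (hx : x ∈ U) (y : Fin n → ℝ) (hy : y ∈ U)
    (hcritx : ∀ j : Fin n,
      L⁻¹ ≤ ⨆ k, ((F' x).mulVec (fun i => if i = j then 1 else -1)) k)
    (hcrity : ∀ j : Fin n,
      L⁻¹ ≤ ⨆ k, ((F' y).mulVec (fun i => if i = j then 1 else -1)) k) :
    ‖x - y‖ ≤ L * ‖F x - F y‖ := by
  haveI : NeZero m := ⟨by omega⟩
  haveI : NeZero n := ⟨by omega⟩
  obtain ⟨j, hj⟩ := Finite.exists_max (fun i : Fin n => |(x - y) i|)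
  have hnorm : ‖x - y‖ = |(x - y) j| := by
    refine le_antisymm ?_ ?_
    · refine (pi_norm_le_iff_of_nonneg (abs_nonneg _)).mpr fun i => ?_
      rw [Real.norm_eq_abs]; exact hj i
    · rw [← Real.norm_eq_abs]; exact norm_le_pi_norm _ j
  rcases le_or_gt 0 ((x - y) j) with h | h
  · exact aux_key (F' y) (hmono y hy) (x - y) (F x - F y) (hconv y hy x hx) j
      (by rw [hnorm, abs_of_nonneg h]) L hL (hcrity j)
  · have h1 : ‖x - y‖ = ‖y - x‖ := norm_sub_rev x y
    have h2 : ‖F x - F y‖ = ‖F y - F x‖ := norm_sub_rev _ _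
    rw [h1, h2]
    refine aux_key (F' x) (hmono x hx) (y - x) (F y - F x) (hconv x hx y hy) j
      ?_ L hL (hcritx j)
    have : (y - x) j = -((x - y) j) := by simp [Pi.sub_apply]
    rw [this, ← h1, hnorm, abs_of_neg h]
end

section
/- Let F : U ⊆ ℝⁿ → ℝᵐ, m ≥ n ≥ 2, be continuously differentiable, pointwise convex and monotonic on a convex open set U containing [−1,3]ⁿ. If F'(−eⱼ + 3eⱼ')(eⱼ − 3eⱼ') ≰ 0 (i.e. has at least one positive entry) for all j ∈ {1,…,n}, then F is injective on [0,1]ⁿ. -/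
open Matrix Set

private lemma mulVec_mono' {m n : ℕ} (M : Matrix (Fin m) (Fin n) ℝ)
    (hM : ∀ k i, 0 ≤ M k i) {u v : Fin n → ℝ} (h : ∀ i, u i ≤ v i) (k : Fin m) :
    M.mulVec u k ≤ M.mulVec v k := by
  simp only [Matrix.mulVec, dotProduct]
  exact Finset.sum_le_sum fun i _ => mul_le_mul_of_nonneg_left (h i) (hM k i)

private lemma key_aux (n m : ℕ)
    (U : Set (Fin n → ℝ))
    (hUsub : Set.Icc (fun _ => (-1:ℝ)) (fun _ => (3:ℝ)) ⊆ U)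
    (F : (Fin n → ℝ) → (Fin m → ℝ))
    (F' : (Fin n → ℝ) → Matrix (Fin m) (Fin n) ℝ)
    (hmono : ∀ z ∈ U, ∀ k j, 0 ≤ F' z k j)
    (hconv : ∀ z ∈ U, ∀ w ∈ U, (F' z).mulVec (w - z) ≤ F w - F z)
    (hcrit : ∀ j : Fin n, ∃ k : Fin m,
      0 < ((F' (fun i => if i = j then -1 else 3)).mulVec
            (fun i => if i = j then 1 else -3)) k)
    (x y : Fin n → ℝ) (hx : x ∈ Set.Icc (0 : Fin n → ℝ) 1)
    (hy : y ∈ Set.Icc (0 : Fin n → ℝ) 1) (hF : F x = F y)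
    (j : Fin n) (hjmax : ∀ i, |y i - x i| ≤ y j - x j)
    (hjpos : 0 < y j - x j) : False := by
  obtain ⟨hx0, hx1⟩ := hx
  obtain ⟨hy0, hy1⟩ := hy
  have hx0' : ∀ i, (0:ℝ) ≤ x i := fun i => hx0 i
  have hx1' : ∀ i, x i ≤ 1 := fun i => hx1 i
  have hy0' : ∀ i, (0:ℝ) ≤ y i := fun i => hy0 i
  have hy1' : ∀ i, y i ≤ 1 := fun i => hy1 i
  set z : Fin n → ℝ := fun i => if i = j then -1 else 3 with hz
  set v : Fin n → ℝ := fun i => if i = j then 1 else -3 with hv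
  set w : Fin n → ℝ := fun i => if i = j then 1 else -1 with hw
  have hzU : z ∈ U := by
    apply hUsub
    constructor
    · intro i; simp only [hz]; split <;> norm_num
    · intro i; simp only [hz]; split <;> norm_num
  have hxU : x ∈ U := by
    apply hUsub
    constructor
    · intro i; have := hx0' i; simpa using by linarith
    · intro i; have := hx1' i; simpa using by linarith
  have hyU : y ∈ U := by
    apply hUsub
    constructor
    · intro i; have := hy0' i; simpa using by linarith
    · intro i; have := hy1' i; simpa using by linarith
  obtain ⟨k, hk⟩ := hcrit j
  have hk' : 0 < (F' z).mulVec v k := hk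
  -- cyclic monotonicity
  have c1 : (F' x).mulVec (z - x) k ≤ (F z - F x) k := hconv x hxU z hzU k
  have c2 : (F' z).mulVec (y - z) k ≤ (F y - F z) k := hconv z hzU y hyU k
  have hFk : F y k = F x k := by rw [hF]
  have csum : (F' x).mulVec (z - x) k + (F' z).mulVec (y - z) k ≤ 0 := by
    have := c1
    have := c2
    simp only [Pi.sub_apply] at *
    linarith
  -- F'(z) (y - z) k > 0
  have hyz : y - z = y + v := by
    funext i
    simp only [Pi.sub_apply, Pi.add_apply, hz, hv]
    split <;> ring
  have hzy_pos : 0 < (F' z).mulVec (y - z) k := by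
    rw [hyz, Matrix.mulVec_add]
    have hy_nonneg : 0 ≤ (F' z).mulVec y k := by
      have := mulVec_mono' (F' z) (hmono z hzU) (u := 0) (v := y)
        (fun i => hy0' i) k
      simpa [Matrix.mulVec_zero] using this
    have : (0:ℝ) < (F' z).mulVec v k := hk'
    simp only [Pi.add_apply]
    linarith
  -- F'(x) (x - z) k > 0
  have hxz_pos : 0 < (F' x).mulVec (x - z) k := by
    have hneg : (F' x).mulVec (x - z) k = -((F' x).mulVec (z - x) k) := by
      have : x - z = -(z - x) := by ring
      rw [this, Matrix.mulVec_neg]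
      simp
    rw [hneg]
    linarith
  -- F'(x) (x - z) k ≤ 2 * F'(x) w k
  have hstep2 : (F' x).mulVec (x - z) k ≤ 2 * (F' x).mulVec w k := by
    have h2w : (F' x).mulVec ((2:ℝ) • w) k = 2 * (F' x).mulVec w k := by
      rw [Matrix.mulVec_smul]
      simp
    have hle : ∀ i, (x - z) i ≤ ((2:ℝ) • w) i := by
      intro i
      simp only [Pi.sub_apply, Pi.smul_apply, smul_eq_mul, hz, hw]
      split
      · have := hx1' i; linarith
      · have := hx1' i; linarith
    calc (F' x).mulVec (x - z) k ≤ (F' x).mulVec ((2:ℝ) • w) k :=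
          mulVec_mono' (F' x) (hmono x hxU) hle k
      _ = 2 * (F' x).mulVec w k := h2w
  have hw_pos : 0 < (F' x).mulVec w k := by linarith
  -- step 3: contradiction
  have hle3 : ∀ i, ((y j - x j) • w) i ≤ (y - x) i := by
    intro i
    simp only [Pi.smul_apply, Pi.sub_apply, smul_eq_mul, hw]
    split
    · rename_i h; subst h; ring_nf; exact le_refl _
    · have := (abs_le.mp (hjmax i)).1
      linarith [this]
  have h3 : (F' x).mulVec ((y j - x j) • w) k ≤ (F' x).mulVec (y - x) k :=
    mulVec_mono' (F' x) (hmono x hxU) hle3 k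
  have h4 : (F' x).mulVec (y - x) k ≤ 0 := by
    have := hconv x hxU y hyU k
    simp only [Pi.sub_apply] at this
    linarith
  have h5 : (F' x).mulVec ((y j - x j) • w) k = (y j - x j) * (F' x).mulVec w k := by
    rw [Matrix.mulVec_smul]; simp
  have h6 : 0 < (y j - x j) * (F' x).mulVec w k := mul_pos hjpos hw_pos
  linarith

theorem stmt_3 (n m : ℕ) (hn : 2 ≤ n) (hnm : n ≤ m)
    (U : Set (Fin n → ℝ)) (hUopen : IsOpen U) (hUconv : Convex ℝ U)
    (hUsub : Set.Icc (fun _ => (-1:ℝ)) (fun _ => (3:ℝ)) ⊆ U)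
    (F : (Fin n → ℝ) → (Fin m → ℝ))
    (F' : (Fin n → ℝ) → Matrix (Fin m) (Fin n) ℝ)
    (hderiv : ∀ z ∈ U, HasFDerivAt F ((F' z).mulVecLin.toContinuousLinearMap) z)
    (hcont : ContinuousOn F' U)
    (hmono : ∀ z ∈ U, ∀ k j, 0 ≤ F' z k j)
    (hconv : ∀ z ∈ U, ∀ w ∈ U, (F' z).mulVec (w - z) ≤ F w - F z)
    (hcrit : ∀ j : Fin n, ∃ k : Fin m,
      0 < ((F' (fun i => if i = j then -1 else 3)).mulVec
            (fun i => if i = j then 1 else -3)) k) :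
    Set.InjOn F (Set.Icc (0 : Fin n → ℝ) 1) := by
  intro x hx y hy hF
  by_contra hne
  have hnonempty : Nonempty (Fin n) := ⟨⟨0, by omega⟩⟩
  obtain ⟨j, -, hjmax⟩ := Finset.exists_max_image Finset.univ
    (fun i => |y i - x i|) ⟨Classical.arbitrary (Fin n), Finset.mem_univ _⟩
  have hjmax' : ∀ i, |y i - x i| ≤ |y j - x j| := fun i => hjmax i (Finset.mem_univ i)
  have hjne : y j ≠ x j := by
    intro h
    apply hne
    funext i
    have := hjmax' i
    rw [h] at this
    simp only [sub_self, abs_zero] at this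
    have : |y i - x i| = 0 := le_antisymm this (abs_nonneg _)
    have := abs_eq_zero.mp this
    linarith [sub_eq_zero.mp this]
  rcases lt_or_gt_of_ne hjne with hlt | hgt
  · -- y j < x j : apply key_aux with y x swapped
    have habs : |x j - y j| = x j - y j := abs_of_pos (by linarith)
    refine key_aux n m U hUsub F F' hmono hconv hcrit y x hy hx hF.symm j
      (fun i => ?_) (by linarith)
    have h1 := hjmax' i
    rw [abs_sub_comm (y j) (x j), habs] at h1
    calc |x i - y i| = |y i - x i| := abs_sub_comm _ _
      _ ≤ x j - y j := h1
  · have habs : |y j - x j| = y j - x j := abs_of_pos (by linarith)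
    refine key_aux n m U hUsub F F' hmono hconv hcrit x y hx hy hF j
      (fun i => ?_) (by linarith)
    have := hjmax' i
    linarith [this]
end

section
/- Let F : U ⊆ ℝⁿ → ℝᵐ, m ≥ n ≥ 2, be continuously differentiable, pointwise convex and monotonic on a convex open set U containing [−1,3]ⁿ, and assume F'(−eⱼ + 3eⱼ')(eⱼ − 3eⱼ') ≰ 0 for all j. Set L := 2 (min_{j} max_{k} eₖᵀ F'(−eⱼ + 3eⱼ')(eⱼ − 3eⱼ'))⁻¹ > 0. Then for all x, y ∈ [0,1]ⁿ one has ‖x − y‖_∞ ≤ L ‖F(x) − F(y)‖_∞, and F'(x) ∈ ℝ^{m×n} is injective with left inverse bounded by ‖F'(x)⁻¹‖_∞ ≤ L. -/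
open Matrix Set

theorem stmt_4 (n m : ℕ) (hn : 2 ≤ n) (hnm : n ≤ m)
    (U : Set (Fin n → ℝ)) (hUopen : IsOpen U) (hUconv : Convex ℝ U)
    (hUsub : Set.Icc (fun _ => (-1:ℝ)) (fun _ => (3:ℝ)) ⊆ U)
    (F : (Fin n → ℝ) → (Fin m → ℝ))
    (F' : (Fin n → ℝ) → Matrix (Fin m) (Fin n) ℝ)
    (hderiv : ∀ z ∈ U, HasFDerivAt F ((F' z).mulVecLin.toContinuousLinearMap) z)
    (hcont : ContinuousOn F' U)
    (hmono : ∀ z ∈ U, ∀ k j, 0 ≤ F' z k j)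
    (hconv : ∀ z ∈ U, ∀ w ∈ U, (F' z).mulVec (w - z) ≤ F w - F z)
    (hcrit : ∀ j : Fin n, ∃ k : Fin m,
      0 < ((F' (fun i => if i = j then -1 else 3)).mulVec
            (fun i => if i = j then 1 else -3)) k)
    (L : ℝ)
    (hLdef : L = 2 * (⨅ j : Fin n, ⨆ k : Fin m,
      ((F' (fun i => if i = j then -1 else 3)).mulVec
        (fun i => if i = j then 1 else -3)) k)⁻¹) :
    0 < L ∧
    ∀ x ∈ Set.Icc (0 : Fin n → ℝ) 1, ∀ y ∈ Set.Icc (0 : Fin n → ℝ) 1,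
      ‖x - y‖ ≤ L * ‖F x - F y‖ ∧
      Function.Injective ((F' x).mulVec) ∧
      ∀ d : Fin n → ℝ, L⁻¹ * ‖d‖ ≤ ‖(F' x).mulVec d‖ := by
  subst hLdef
  have hNn : Nonempty (Fin n) := ⟨⟨0, by omega⟩⟩
  have hNm : Nonempty (Fin m) := ⟨⟨0, by omega⟩⟩
  set c : ℝ := ⨅ j : Fin n, ⨆ k : Fin m,
      ((F' (fun i => if i = j then -1 else 3)).mulVec
        (fun i => if i = j then 1 else -3)) k with hcdef
  -- membership facts
  have hbox : ∀ x ∈ Set.Icc (0 : Fin n → ℝ) 1, x ∈ U := by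
    intro x hx
    apply hUsub
    refine ⟨fun i => ?_, fun i => ?_⟩
    · have := hx.1 i; simp only [Pi.zero_apply] at this; dsimp; linarith
    · have := hx.2 i; simp only [Pi.one_apply] at this; dsimp; linarith
  have hzU : ∀ j : Fin n, (fun i => if i = j then (-1:ℝ) else 3) ∈ U := by
    intro j
    apply hUsub
    refine ⟨fun i => ?_, fun i => ?_⟩ <;> by_cases h : i = j <;> simp [h] <;> norm_num
  -- positivity of c
  have hSpos : ∀ j : Fin n, 0 < ⨆ k : Fin m,
      ((F' (fun i => if i = j then (-1:ℝ) else 3)).mulVec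
        (fun i => if i = j then (1:ℝ) else -3)) k := by
    intro j
    obtain ⟨k, hk⟩ := hcrit j
    exact lt_of_lt_of_le hk (le_ciSup (Finite.bddAbove_range _) k)
  have hcpos : 0 < c := by
    obtain ⟨j0, hj0⟩ := Finite.exists_min (fun j : Fin n => ⨆ k : Fin m,
      ((F' (fun i => if i = j then (-1:ℝ) else 3)).mulVec
        (fun i => if i = j then (1:ℝ) else -3)) k)
    have : c = ⨆ k : Fin m,
        ((F' (fun i => if i = j0 then (-1:ℝ) else 3)).mulVec
          (fun i => if i = j0 then (1:ℝ) else -3)) k :=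
      le_antisymm (ciInf_le (Finite.bddBelow_range _) j0) (le_ciInf hj0)
    rw [this]
    exact hSpos j0
  -- for every j there is a row k with c ≤ (F'(z j) v j) k
  have hck : ∀ j : Fin n, ∃ k : Fin m,
      c ≤ ((F' (fun i => if i = j then (-1:ℝ) else 3)).mulVec
        (fun i => if i = j then (1:ℝ) else -3)) k := by
    intro j
    obtain ⟨k, hk⟩ := Finite.exists_max (fun k : Fin m =>
      ((F' (fun i => if i = j then (-1:ℝ) else 3)).mulVec
        (fun i => if i = j then (1:ℝ) else -3)) k)
    exact ⟨k, le_trans (ciInf_le (Finite.bddBelow_range _) j) (ciSup_le hk)⟩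
  -- core row inequality
  have core : ∀ x ∈ Set.Icc (0 : Fin n → ℝ) 1, ∀ (j : Fin n) (k : Fin m),
      ((F' (fun i => if i = j then (-1:ℝ) else 3)).mulVec
        (fun i => if i = j then (1:ℝ) else -3)) k
        ≤ 2 * ∑ i, F' x k i * (if i = j then (1:ℝ) else -1) := by
    intro x hx j k
    set zj : Fin n → ℝ := fun i => if i = j then (-1:ℝ) else 3 with hzj
    have hxU := hbox x hx
    have hzjU := hzU j
    have e1 := hconv zj hzjU x hxU k
    have e2 := hconv x hxU zj hzjU k
    simp only [Matrix.mulVec, dotProduct, Pi.sub_apply] at e1 e2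
    have e3 : ∑ i, (F' x k i * (zj i - x i) + F' x k i * (x i - zj i)) = 0 :=
      Finset.sum_eq_zero (fun i _ => by ring)
    rw [Finset.sum_add_distrib] at e3
    have pair : ∑ i, F' zj k i * (x i - zj i) ≤ ∑ i, F' x k i * (x i - zj i) := by
      linarith
    have step : ∀ i ∈ Finset.univ, F' zj k i * (if i = j then (1:ℝ) else -3)
        + (F' x k i * (x i - zj i) - F' zj k i * (x i - zj i))
        ≤ 2 * (F' x k i * (if i = j then (1:ℝ) else -1)) := by
      intro i _
      have hA := hmono x hxU k i
      have hB := hmono zj hzjU k i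
      have hx0 := hx.1 i
      have hx1 := hx.2 i
      simp only [Pi.zero_apply] at hx0
      simp only [Pi.one_apply] at hx1
      by_cases h : i = j
      · have hz : zj i = -1 := by simp [hzj, h]
        simp only [if_pos h, hz]
        nlinarith [mul_nonneg (sub_nonneg.mpr hx1) hA, mul_nonneg hx0 hB]
      · have hz : zj i = 3 := by simp [hzj, h]
        simp only [if_neg h, hz]
        nlinarith [mul_nonneg (sub_nonneg.mpr hx1) hA, mul_nonneg hx0 hB]
    have hsum := Finset.sum_le_sum step
    rw [Finset.sum_add_distrib, Finset.sum_sub_distrib, ← Finset.mul_sum] at hsum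
    have expand : ((F' zj).mulVec (fun i => if i = j then (1:ℝ) else -3)) k
        = ∑ i, F' zj k i * (if i = j then (1:ℝ) else -3) := by
      simp [Matrix.mulVec, dotProduct]
    rw [expand]
    linarith
  -- master bound
  have master : ∀ x ∈ Set.Icc (0 : Fin n → ℝ) 1, ∀ (d : Fin n → ℝ) (G : Fin m → ℝ)
      (j : Fin n), (F' x).mulVec d ≤ G → (∀ i, |d i| ≤ d j) → c * d j ≤ 2 * ‖G‖ := by
    intro x hx d G j hG hj
    obtain ⟨k, hk⟩ := hck j
    have hdj : 0 ≤ d j := le_trans (abs_nonneg _) (hj j)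
    have h1 := core x hx j k
    have h2 : d j * ∑ i, F' x k i * (if i = j then (1:ℝ) else -1)
        ≤ ∑ i, F' x k i * d i := by
      rw [Finset.mul_sum]
      refine Finset.sum_le_sum (fun i _ => ?_)
      have hA := hmono x (hbox x hx) k i
      by_cases h : i = j
      · subst h; simp only [ite_true, if_pos rfl]; nlinarith
      · have hdi := abs_le.mp (hj i)
        simp only [if_neg h]
        nlinarith [hdi.1, hdi.2]
    have h3 : ∑ i, F' x k i * d i ≤ G k := by
      have := hG k
      simpa [Matrix.mulVec, dotProduct] using this
    have h4 : G k ≤ ‖G‖ :=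
      le_trans (le_abs_self _) (by simpa [Real.norm_eq_abs] using norm_le_pi_norm G k)
    have e1 : c * d j ≤ ((F' (fun i => if i = j then (-1:ℝ) else 3)).mulVec
        (fun i => if i = j then (1:ℝ) else -3)) k * d j :=
      mul_le_mul_of_nonneg_right hk hdj
    have e2 : ((F' (fun i => if i = j then (-1:ℝ) else 3)).mulVec
        (fun i => if i = j then (1:ℝ) else -3)) k * d j
        ≤ (2 * ∑ i, F' x k i * (if i = j then (1:ℝ) else -1)) * d j :=
      mul_le_mul_of_nonneg_right h1 hdj
    nlinarith [h2, h3, h4]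
  -- norm attainment helper
  have hnorm : ∀ d : Fin n → ℝ, ∃ j : Fin n, ‖d‖ = |d j| ∧ ∀ i, |d i| ≤ |d j| := by
    intro d
    obtain ⟨j, hj⟩ := Finite.exists_max (fun i => |d i|)
    refine ⟨j, le_antisymm ?_ ?_, hj⟩
    · exact (pi_norm_le_iff_of_nonneg (abs_nonneg _)).mpr
        (fun i => by simpa [Real.norm_eq_abs] using hj i)
    · simpa [Real.norm_eq_abs] using norm_le_pi_norm d j
  have hLpos : 0 < 2 * c⁻¹ := by positivity
  refine ⟨hLpos, ?_⟩
  intro x hx y hy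
  -- part 1 helper
  have part1 : ∀ a ∈ Set.Icc (0 : Fin n → ℝ) 1, ∀ b ∈ Set.Icc (0 : Fin n → ℝ) 1,
      ∀ j : Fin n, (∀ i, |(a - b) i| ≤ (a - b) j) →
      c * (a - b) j ≤ 2 * ‖F a - F b‖ := by
    intro a ha b hb j hj
    exact master b hb (a - b) (F a - F b) j (hconv b (hbox b hb) a (hbox a ha)) hj
  -- derivative bound
  have keybound : ∀ d : Fin n → ℝ, c * ‖d‖ ≤ 2 * ‖(F' x).mulVec d‖ := by
    intro d
    obtain ⟨j, hj1, hj2⟩ := hnorm d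
    rcases le_or_gt 0 (d j) with h | h
    · have := master x hx d ((F' x).mulVec d) j le_rfl
        (fun i => le_trans (hj2 i) (le_of_eq (abs_of_nonneg h)))
      rw [hj1, abs_of_nonneg h]
      exact this
    · have := master x hx (-d) ((F' x).mulVec (-d)) j le_rfl
        (fun i => by
          simp only [Pi.neg_apply, abs_neg]
          exact le_trans (hj2 i) (le_of_eq (abs_of_neg h)))
      rw [Matrix.mulVec_neg, norm_neg] at this
      rw [hj1, abs_of_neg h]
      simpa using this
  refine ⟨?_, ?_, ?_⟩
  · -- bilipschitz lower bound
    obtain ⟨j, hj1, hj2⟩ := hnorm (x - y)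
    have key : c * ‖x - y‖ ≤ 2 * ‖F x - F y‖ := by
      rcases le_or_gt 0 ((x - y) j) with h | h
      · have := part1 x hx y hy j (fun i => le_trans (hj2 i) (le_of_eq (abs_of_nonneg h)))
        rw [hj1, abs_of_nonneg h]
        exact this
      · have hji : ∀ i, |(y - x) i| ≤ (y - x) j := by
          intro i
          have : |(y - x) i| = |(x - y) i| := by
            simp only [Pi.sub_apply, abs_sub_comm]
          rw [this]
          refine le_trans (hj2 i) ?_
          rw [abs_of_neg h]
          have : (y - x) j = -((x - y) j) := by simp [Pi.sub_apply]
          rw [this]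
        have := part1 y hy x hx j hji
        rw [norm_sub_rev (F y) (F x)] at this
        rw [hj1, abs_of_neg h]
        have e : (y - x) j = -((x - y) j) := by simp [Pi.sub_apply]
        rw [e] at this
        exact this
    have e : 2 * c⁻¹ * ‖F x - F y‖ = 2 * ‖F x - F y‖ / c := by ring
    rw [e, le_div_iff₀ hcpos]
    nlinarith [key]
  · -- injectivity
    intro d1 d2 hd
    have h0 := keybound (d1 - d2)
    have e : (F' x).mulVec (d1 - d2) = 0 := by
      rw [Matrix.mulVec_sub, hd, sub_self]
    rw [e, norm_zero, mul_zero] at h0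
    have : ‖d1 - d2‖ ≤ 0 := by
      by_contra hcon
      push_neg at hcon
      nlinarith
    have : d1 - d2 = 0 := by
      rw [← norm_le_zero_iff]
      exact this
    exact sub_eq_zero.mp this
  · -- left inverse bound
    intro d
    have := keybound d
    have e : (2 * c⁻¹)⁻¹ = c / 2 := by
      rw [mul_inv, inv_inv]; ring
    rw [e]
    nlinarith [this]
end

section
/- Let F : U ⊆ ℝⁿ → ℝᵐ be monotonic (F'(x) ≥ 0 entrywise) and convex (F(y) − F(x) ≥ F'(x)(y−x) entrywise) on a convex open set U containing [−1,3]ⁿ. Then for every j ∈ {1,…,n} and every x ∈ [0,1]ⁿ, setting z⁽ʲ⁾ := −eⱼ + 3eⱼ', one has F'(x)(eⱼ − eⱼ') ≥ (1/2) F'(z⁽ʲ⁾)(eⱼ − 3eⱼ') entrywise. -/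
open Matrix Set

private lemma mv_mono {n m : ℕ} (A : Matrix (Fin m) (Fin n) ℝ)
    (hA : ∀ k j, 0 ≤ A k j) {u v : Fin n → ℝ} (h : u ≤ v) :
    A.mulVec u ≤ A.mulVec v := by
  intro k
  simp only [Matrix.mulVec, dotProduct]
  exact Finset.sum_le_sum fun i _ => mul_le_mul_of_nonneg_left (h i) (hA k i)

theorem stmt_5 (n m : ℕ) (hn : 2 ≤ n) (hnm : n ≤ m)
    (U : Set (Fin n → ℝ)) (hUopen : IsOpen U) (hUconv : Convex ℝ U)
    (hUsub : Set.Icc (fun _ => (-1:ℝ)) (fun _ => (3:ℝ)) ⊆ U)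
    (F : (Fin n → ℝ) → (Fin m → ℝ))
    (F' : (Fin n → ℝ) → Matrix (Fin m) (Fin n) ℝ)
    (hderiv : ∀ z ∈ U, HasFDerivAt F ((F' z).mulVecLin.toContinuousLinearMap) z)
    (hmono : ∀ z ∈ U, ∀ k j, 0 ≤ F' z k j)
    (hconv : ∀ z ∈ U, ∀ w ∈ U, (F' z).mulVec (w - z) ≤ F w - F z) :
    ∀ j : Fin n, ∀ x ∈ Set.Icc (0 : Fin n → ℝ) 1,
      (1/2 : ℝ) • ((F' (fun i => if i = j then -1 else 3)).mulVec
          (fun i => if i = j then 1 else -3))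
        ≤ (F' x).mulVec (fun i => if i = j then 1 else -1) := by
  intro j x hx
  obtain ⟨hx0, hx1⟩ := hx
  have hx0' : ∀ i, (0:ℝ) ≤ x i := fun i => hx0 i
  have hx1' : ∀ i, x i ≤ (1:ℝ) := fun i => hx1 i
  set z : Fin n → ℝ := fun i => if i = j then -1 else 3 with hzdef
  have hzU : z ∈ U := by
    apply hUsub
    constructor <;> intro i <;> simp only [hzdef] <;> split <;> norm_num
  have hxU : x ∈ U := by
    apply hUsub
    constructor <;> intro i
    · exact le_trans (by norm_num) (hx0' i)
    · exact le_trans (hx1' i) (by norm_num)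
  have h1 := hconv z hzU x hxU
  have h2 := hconv x hxU z hzU
  have hchain : (F' z).mulVec (x - z) ≤ (F' x).mulVec (x - z) := by
    intro k
    have := h1 k
    have h2k := h2 k
    have hneg : (F' x).mulVec (z - x) = -(F' x).mulVec (x - z) := by
      rw [show z - x = -(x - z) by ring, Matrix.mulVec_neg]
    rw [hneg] at h2k
    have := h2k
    simp only [Pi.sub_apply, Pi.neg_apply] at *
    linarith [h1 k]
  have hlow : (F' z).mulVec (fun i => if i = j then 1 else -3) ≤ (F' z).mulVec (x - z) := by
    apply mv_mono _ (hmono z hzU)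
    intro i
    simp only [Pi.sub_apply, hzdef]
    split_ifs with h <;> linarith [hx0' i, hx1' i]
  set w : Fin n → ℝ := fun i => if i = j then 2 else -2 with hwdef
  have hup : (F' x).mulVec (x - z) ≤ (F' x).mulVec w := by
    apply mv_mono _ (hmono x hxU)
    intro i
    simp only [Pi.sub_apply, hzdef, hwdef]
    split_ifs with h <;> linarith [hx0' i, hx1' i]
  have hwsmul : (F' x).mulVec w = (2:ℝ) • (F' x).mulVec (fun i => if i = j then 1 else -1) := by
    rw [show w = (2:ℝ) • (fun i => if i = j then (1:ℝ) else -1) by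
      funext i; simp only [hwdef, Pi.smul_apply, smul_eq_mul]; split <;> norm_num,
      Matrix.mulVec_smul]
  rw [hwsmul] at hup
  intro k
  have hA := hlow k
  have hB := hchain k
  have hC := hup k
  simp only [Pi.smul_apply, smul_eq_mul] at *
  linarith
end

section
/- Let F : U ⊆ ℝⁿ → ℝⁿ be continuously differentiable and pointwise convex (F(y) − F(x) ≥ F'(x)(y−x) entrywise) on a convex open set U containing 0, and let M ∈ ℝ^{n×n}. Suppose x ∈ U is such that F'(x) is invertible, M F'(x)⁻¹ ≥ 0 entrywise, F(x) ≥ 0 ≥ F(0), and Mx ≥ 0. Then for all t ∈ [0,1], the damped Newton point x⁽ᵗ⁾ := x − t F'(x)⁻¹ F(x) satisfies 0 ≤ M x⁽ᵗ⁾ ≤ M x entrywise; moreover, if x⁽ᵗ⁾ ∈ U then F(x⁽ᵗ⁾) ≥ (1−t) F(x) ≥ 0. -/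
open Matrix Set

theorem stmt_10 (n : ℕ) (hn : 2 ≤ n)
    (U : Set (Fin n → ℝ)) (hUopen : IsOpen U) (hUconv : Convex ℝ U)
    (h0U : (0 : Fin n → ℝ) ∈ U)
    (F : (Fin n → ℝ) → (Fin n → ℝ))
    (F' : (Fin n → ℝ) → Matrix (Fin n) (Fin n) ℝ)
    (hderiv : ∀ z ∈ U, HasFDerivAt F ((F' z).mulVecLin.toContinuousLinearMap) z)
    (hcont : ContinuousOn F' U)
    (hconv : ∀ z ∈ U, ∀ w ∈ U, (F' z).mulVec (w - z) ≤ F w - F z)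
    (M : Matrix (Fin n) (Fin n) ℝ)
    (x : Fin n → ℝ) (hx : x ∈ U)
    (hinv : IsUnit (F' x))
    (hMF : ∀ i j, 0 ≤ (M * (F' x)⁻¹) i j)
    (hFx : 0 ≤ F x) (hF0 : F 0 ≤ 0) (hMx : 0 ≤ M.mulVec x) :
    ∀ t ∈ Set.Icc (0:ℝ) 1,
      0 ≤ M.mulVec (x - t • ((F' x)⁻¹.mulVec (F x))) ∧
      M.mulVec (x - t • ((F' x)⁻¹.mulVec (F x))) ≤ M.mulVec x ∧
      ((x - t • ((F' x)⁻¹.mulVec (F x))) ∈ U →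
        (1 - t) • F x ≤ F (x - t • ((F' x)⁻¹.mulVec (F x))) ∧
        0 ≤ (1 - t) • F x) := by
  intro t ht
  obtain ⟨ht0, ht1⟩ := ht
  have hdet : IsUnit (F' x).det := (Matrix.isUnit_iff_isUnit_det _).mp hinv
  set d : Fin n → ℝ := (F' x)⁻¹.mulVec (F x) with hd
  set A : Matrix (Fin n) (Fin n) ℝ := M * (F' x)⁻¹ with hA
  -- M d = A (F x)
  have hMd : M.mulVec d = A.mulVec (F x) := by
    rw [hd, hA, Matrix.mulVec_mulVec]
  -- monotonicity of A.mulVec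
  have hmono : ∀ u v : Fin n → ℝ, u ≤ v → A.mulVec u ≤ A.mulVec v := by
    intro u v huv i
    simp only [Matrix.mulVec, dotProduct]
    exact Finset.sum_le_sum fun j _ => mul_le_mul_of_nonneg_left (huv j) (hMF i j)
  -- F x ≤ F'(x) x from convexity toward 0
  have hFxx : F x ≤ (F' x).mulVec x := by
    have h := hconv x hx 0 h0U
    have : -((F' x).mulVec x) ≤ F 0 - F x := by
      simpa [Matrix.mulVec_neg] using h
    intro i
    have h0 := hF0 i
    have h1 := this i
    simp only [Pi.neg_apply, Pi.sub_apply, Pi.zero_apply] at h0 h1 ⊢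
    linarith
  -- A (F'(x) x) = M x
  have hAx : A.mulVec ((F' x).mulVec x) = M.mulVec x := by
    rw [hA, Matrix.mulVec_mulVec, Matrix.mul_assoc, Matrix.nonsing_inv_mul _ hdet,
      Matrix.mul_one]
  have hAF_le : A.mulVec (F x) ≤ M.mulVec x := by
    rw [← hAx]; exact hmono _ _ hFxx
  have hAF_nonneg : 0 ≤ A.mulVec (F x) := by
    have := hmono 0 (F x) hFx
    simpa using this
  have hexp : M.mulVec (x - t • d) = M.mulVec x - t • A.mulVec (F x) := by
    rw [Matrix.mulVec_sub, Matrix.mulVec_smul, hMd]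
  refine ⟨?_, ?_, ?_⟩
  · rw [hexp]
    intro i
    have h1 := hAF_le i
    have h2 := hMx i
    have h3 := hAF_nonneg i
    simp only [Pi.sub_apply, Pi.smul_apply, Pi.zero_apply, smul_eq_mul] at *
    nlinarith
  · rw [hexp]
    intro i
    have h3 := hAF_nonneg i
    simp only [Pi.sub_apply, Pi.smul_apply, Pi.zero_apply, smul_eq_mul] at *
    nlinarith
  · intro hmem
    have hconvx := hconv x hx _ hmem
    have hcalc : (F' x).mulVec ((x - t • d) - x) = -(t • F x) := by
      have : (x - t • d) - x = -(t • d) := by abel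
      rw [this, Matrix.mulVec_neg, Matrix.mulVec_smul, hd, Matrix.mulVec_mulVec,
        Matrix.mul_nonsing_inv _ hdet, Matrix.one_mulVec]
    rw [hcalc] at hconvx
    constructor
    · intro i
      have := hconvx i
      simp only [Pi.neg_apply, Pi.smul_apply, Pi.sub_apply, smul_eq_mul] at *
      linarith
    · intro i
      have h2 := hFx i
      simp only [Pi.smul_apply, Pi.zero_apply, smul_eq_mul] at *
      nlinarith
end

section
/- Let F : U ⊆ ℝⁿ → ℝⁿ, n ≥ 2, be continuously differentiable, pointwise convex and monotonic on a convex open set U with [−2, n(n+3)]ⁿ ⊂ U, and assume F'(z⁽ʲ⁾)d⁽ʲ⁾ ≰ 0 for all j ∈ {1,…,n}, where z⁽ʲ⁾ := −2eⱼ + n(n+3)eⱼ' and d⁽ʲ⁾ := eⱼ − (n²+3n+1)eⱼ'. Then F is injective on [−1,n]ⁿ, F'(x) is invertible for all x ∈ [−1,n]ⁿ, and with L := (n+2)(min_j max_k eₖᵀ F'(z⁽ʲ⁾)d⁽ʲ⁾)⁻¹ one has ‖x−y‖_∞ ≤ L‖F(x)−F(y)‖_∞ and ‖F'(x)⁻¹‖_∞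 ≤ L for all x, y ∈ [−1,n]ⁿ. -/
open Matrix Set

lemma mulVec_mono_aux {n : ℕ} (A : Matrix (Fin n) (Fin n) ℝ)
    (hA : ∀ k j, 0 ≤ A k j) {u w : Fin n → ℝ} (h : u ≤ w) :
    A.mulVec u ≤ A.mulVec w := by
  intro k
  simp only [Matrix.mulVec, dotProduct]
  exact Finset.sum_le_sum fun i _ => mul_le_mul_of_nonneg_left (h i) (hA k i)

set_option maxHeartbeats 1000000 in
theorem stmt_12 (n : ℕ) (hn : 2 ≤ n)
    (U : Set (Fin n → ℝ)) (hUopen : IsOpen U) (hUconv : Convex ℝ U)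
    (hUsub : Set.Icc (fun _ => (-2:ℝ)) (fun _ => (n:ℝ) * ((n:ℝ) + 3)) ⊆ U)
    (F : (Fin n → ℝ) → (Fin n → ℝ))
    (F' : (Fin n → ℝ) → Matrix (Fin n) (Fin n) ℝ)
    (hderiv : ∀ z ∈ U, HasFDerivAt F ((F' z).mulVecLin.toContinuousLinearMap) z)
    (hcont : ContinuousOn F' U)
    (hmono : ∀ z ∈ U, ∀ k j, 0 ≤ F' z k j)
    (hconv : ∀ z ∈ U, ∀ w ∈ U, (F' z).mulVec (w - z) ≤ F w - F z)
    (hcrit : ∀ j : Fin n, ∃ k : Fin n,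
      0 < ((F' (fun i => if i = j then -2 else (n:ℝ) * ((n:ℝ) + 3))).mulVec
            (fun i => if i = j then 1 else -((n:ℝ)^2 + 3 * n + 1))) k)
    (L : ℝ)
    (hLdef : L = ((n:ℝ) + 2) * (⨅ j : Fin n, ⨆ k : Fin n,
      ((F' (fun i => if i = j then -2 else (n:ℝ) * ((n:ℝ) + 3))).mulVec
        (fun i => if i = j then 1 else -((n:ℝ)^2 + 3 * n + 1))) k)⁻¹) :
    Set.InjOn F (Set.Icc (fun _ => (-1:ℝ)) (fun _ => (n:ℝ))) ∧
    ∀ x ∈ Set.Icc (fun _ => (-1:ℝ)) (fun _ => (n:ℝ)),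
      IsUnit (F' x) ∧
      (∀ y ∈ Set.Icc (fun _ => (-1:ℝ)) (fun _ => (n:ℝ)),
        ‖x - y‖ ≤ L * ‖F x - F y‖) ∧
      ∀ d : Fin n → ℝ, ‖(F' x)⁻¹.mulVec d‖ ≤ L * ‖d‖ := by
  classical
  have hn0 : 0 < n := by omega
  have : Nonempty (Fin n) := ⟨⟨0, hn0⟩⟩
  have hn2 : (2:ℝ) ≤ (n:ℝ) := by exact_mod_cast hn
  set Box : Set (Fin n → ℝ) := Set.Icc (fun _ => (-1:ℝ)) (fun _ => (n:ℝ)) with hBox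
  set z : Fin n → (Fin n → ℝ) :=
    fun j i => if i = j then -2 else (n:ℝ) * ((n:ℝ) + 3) with hzdef
  set dd : Fin n → (Fin n → ℝ) :=
    fun j i => if i = j then 1 else -((n:ℝ)^2 + 3 * n + 1) with hdddef
  set w : Fin n → (Fin n → ℝ) := fun j => (F' (z j)).mulVec (dd j) with hwdef
  set m : Fin n → ℝ := fun j => ⨆ k, w j k with hmdef
  set μ : ℝ := ⨅ j, m j with hμdef
  have hLμ : L = ((n:ℝ) + 2) * μ⁻¹ := hLdef
  -- basic membership facts
  have hBoxU : ∀ x ∈ Box, x ∈ U := by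
    intro x hx
    apply hUsub
    constructor
    · intro i; have := hx.1 i; simp only at this ⊢; linarith
    · intro i; have := hx.2 i; simp only at this ⊢; nlinarith
  have hzU : ∀ j, z j ∈ U := by
    intro j
    apply hUsub
    constructor
    · intro i; simp only [hzdef]; split <;> nlinarith
    · intro i; simp only [hzdef]; split <;> nlinarith
  -- positivity of m and μ
  have hmpos : ∀ j, 0 < m j := by
    intro j
    obtain ⟨k, hk⟩ := hcrit j
    have hk' : (0:ℝ) < w j k := hk
    calc (0:ℝ) < w j k := hk'
    _ ≤ m j := le_ciSup (Set.finite_range _).bddAbove k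
  have hμpos : 0 < μ := by
    obtain ⟨j0, hj0⟩ := Finite.exists_min m
    have : μ = m j0 := le_antisymm (ciInf_le (Set.finite_range _).bddBelow j0)
      (le_ciInf hj0)
    rw [this]; exact hmpos j0
  have hμle : ∀ j, μ ≤ m j := fun j => ciInf_le (Set.finite_range _).bddBelow j
  have hLpos : 0 < L := by
    rw [hLμ]; positivity
  -- key estimate
  have key : ∀ x ∈ Box, ∀ v : Fin n → ℝ, ∀ j : Fin n, v j = ‖v‖ →
      ∃ k, ‖v‖ * μ ≤ ((n:ℝ) + 2) * ((F' x).mulVec v) k := by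
    intro x hx v j hj
    obtain ⟨k, hk⟩ := Finite.exists_max (w j)
    have hmk : m j ≤ w j k := ciSup_le hk
    refine ⟨k, ?_⟩
    have hxU : x ∈ U := hBoxU x hx
    have hδ : (0:ℝ) ≤ ‖v‖ := norm_nonneg v
    have hvi : ∀ i, -‖v‖ ≤ v i := by
      intro i
      have := norm_le_pi_norm v i
      rw [Real.norm_eq_abs] at this
      linarith [abs_le.mp this |>.1]
    -- step 1 : F'(z j) (x - z j) ≤ F'(x) (x - z j)
    have h1 : (F' (z j)).mulVec (x - z j) ≤ (F' x).mulVec (x - z j) := by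
      have ha := hconv (z j) (hzU j) x hxU
      have hb := hconv x hxU (z j) (hzU j)
      intro k'
      have ha' := ha k'
      have hb' := hb k'
      have hneg : (F' x).mulVec (z j - x) = -((F' x).mulVec (x - z j)) := by
        rw [show z j - x = -(x - z j) by ring, Matrix.mulVec_neg]
      rw [hneg] at hb'
      simp only [Pi.sub_apply, Pi.neg_apply] at ha' hb' ⊢
      linarith
    -- step 2 : dd j ≤ x - z j
    have h2 : dd j ≤ x - z j := by
      intro i
      have h1i := hx.1 i
      have h2i := hx.2 i
      simp only at h1i h2i
      simp only [hdddef, hzdef, Pi.sub_apply]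
      by_cases hij : i = j
      · subst hij; simp only [if_pos rfl]; simp only [if_true]; nlinarith
      · simp only [if_neg hij]; nlinarith
    have h3 : w j ≤ (F' (z j)).mulVec (x - z j) :=
      mulVec_mono_aux _ (hmono _ (hzU j)) h2
    -- step 3 : ‖v‖ • (x - z j) ≤ (n+2) • v
    have h4 : ‖v‖ • (x - z j) ≤ ((n:ℝ) + 2) • v := by
      intro i
      have h1i := hx.1 i
      have h2i := hx.2 i
      simp only at h1i h2i
      have hvii := hvi i
      simp only [hzdef, Pi.smul_apply, Pi.sub_apply, smul_eq_mul]
      by_cases hij : i = j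
      · subst hij; simp only [if_pos rfl]; simp only [if_true]; rw [hj]; nlinarith
      · simp only [if_neg hij]
        nlinarith [mul_le_mul_of_nonneg_left h2i hδ,
          mul_le_mul_of_nonneg_left hvii (by linarith : (0:ℝ) ≤ (n:ℝ) + 2),
          mul_nonneg hδ (by nlinarith : (0:ℝ) ≤ (n:ℝ)^2 + (n:ℝ) - 2)]
    have h5 : (F' x).mulVec (‖v‖ • (x - z j)) ≤ (F' x).mulVec (((n:ℝ) + 2) • v) :=
      mulVec_mono_aux _ (hmono _ hxU) h4
    have h5k := h5 k
    rw [Matrix.mulVec_smul, Matrix.mulVec_smul] at h5k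
    simp only [Pi.smul_apply, smul_eq_mul] at h5k
    have h1k := h1 k
    have h3k := h3 k
    have hwk : μ ≤ w j k := le_trans (hμle j) hmk
    nlinarith [mul_le_mul_of_nonneg_left h1k hδ, mul_le_mul_of_nonneg_left h3k hδ,
      mul_le_mul_of_nonneg_left hwk hδ]
  -- abs version for arbitrary v
  have key2 : ∀ x ∈ Box, ∀ v : Fin n → ℝ,
      ∃ k, ‖v‖ * μ ≤ ((n:ℝ) + 2) * |((F' x).mulVec v) k| := by
    intro x hx v
    obtain ⟨j, hj⟩ := Finite.exists_max (fun i => |v i|)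
    have hnv : ‖v‖ = |v j| := by
      refine le_antisymm ?_ ?_
      · rw [pi_norm_le_iff_of_nonneg (abs_nonneg _)]
        intro i; rw [Real.norm_eq_abs]; exact hj i
      · have := norm_le_pi_norm v j; rwa [Real.norm_eq_abs] at this
    rcases le_or_gt 0 (v j) with hs | hs
    · have hvj : v j = ‖v‖ := by rw [hnv, abs_of_nonneg hs]
      obtain ⟨k, hk⟩ := key x hx v j hvj
      exact ⟨k, le_trans hk (by
        have : ((F' x).mulVec v) k ≤ |((F' x).mulVec v) k| := le_abs_self _
        nlinarith)⟩
    · have hvj : (-v) j = ‖-v‖ := by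
        rw [norm_neg, hnv, Pi.neg_apply, abs_of_neg hs]
      obtain ⟨k, hk⟩ := key x hx (-v) j hvj
      rw [norm_neg, Matrix.mulVec_neg] at hk
      refine ⟨k, le_trans hk ?_⟩
      have : -((F' x).mulVec v) k ≤ |((F' x).mulVec v) k| := neg_le_abs _
      simp only [Pi.neg_apply]
      nlinarith
  -- transfer: ‖v‖ * μ ≤ (n+2) * c with c ≤ ‖u‖ gives ‖v‖ ≤ L * ‖u‖
  have transfer : ∀ (a c : ℝ), a * μ ≤ ((n:ℝ) + 2) * c → a ≤ L * c := by
    intro a c h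
    rw [hLμ, mul_assoc]
    calc a ≤ ((n:ℝ)+2) * c / μ := by rw [le_div_iff₀ hμpos]; exact h
    _ = ((n:ℝ)+2) * (μ⁻¹ * c) := by field_simp
  -- bound on mulVec: ‖v‖ ≤ L * ‖(F' x).mulVec v‖
  have bound : ∀ x ∈ Box, ∀ v : Fin n → ℝ, ‖v‖ ≤ L * ‖(F' x).mulVec v‖ := by
    intro x hx v
    obtain ⟨k, hk⟩ := key2 x hx v
    apply transfer
    calc ‖v‖ * μ ≤ ((n:ℝ)+2) * |((F' x).mulVec v) k| := hk
    _ ≤ ((n:ℝ)+2) * ‖(F' x).mulVec v‖ := by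
        have := norm_le_pi_norm ((F' x).mulVec v) k
        rw [Real.norm_eq_abs] at this
        nlinarith
  -- Lipschitz-type bound
  have lip : ∀ x ∈ Box, ∀ y ∈ Box, ‖x - y‖ ≤ L * ‖F x - F y‖ := by
    intro x hx y hy
    set v : Fin n → ℝ := y - x with hv
    obtain ⟨j, hj⟩ := Finite.exists_max (fun i => |v i|)
    have hnv : ‖v‖ = |v j| := by
      refine le_antisymm ?_ ?_
      · rw [pi_norm_le_iff_of_nonneg (abs_nonneg _)]
        intro i; rw [Real.norm_eq_abs]; exact hj i
      · have := norm_le_pi_norm v j; rwa [Real.norm_eq_abs] at this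
    have hxy : ‖x - y‖ = ‖v‖ := by rw [hv]; exact norm_sub_rev x y
    have hFxy : ‖F x - F y‖ = ‖F y - F x‖ := norm_sub_rev _ _
    rcases le_or_gt 0 (v j) with hs | hs
    · have hvj : v j = ‖v‖ := by rw [hnv, abs_of_nonneg hs]
      obtain ⟨k, hk⟩ := key x hx v j hvj
      rw [hxy, hFxy]
      apply transfer
      calc ‖v‖ * μ ≤ ((n:ℝ)+2) * ((F' x).mulVec v) k := hk
      _ ≤ ((n:ℝ)+2) * (F y - F x) k := by
          have := hconv x (hBoxU x hx) y (hBoxU y hy) k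
          nlinarith
      _ ≤ ((n:ℝ)+2) * ‖F y - F x‖ := by
          have h1 := norm_le_pi_norm (F y - F x) k
          rw [Real.norm_eq_abs] at h1
          have := le_abs_self ((F y - F x) k)
          nlinarith
    · have hvj : (-v) j = ‖-v‖ := by
        rw [norm_neg, hnv, Pi.neg_apply, abs_of_neg hs]
      have hneg : -v = x - y := by rw [hv]; exact neg_sub y x
      rw [hneg] at hvj
      obtain ⟨k, hk⟩ := key y hy (x - y) j hvj
      rw [hxy, ← norm_neg v, hneg]
      apply transfer
      calc ‖x - y‖ * μ ≤ ((n:ℝ)+2) * ((F' y).mulVec (x - y)) k := hk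
      _ ≤ ((n:ℝ)+2) * (F x - F y) k := by
          have := hconv y (hBoxU y hy) x (hBoxU x hx) k
          nlinarith
      _ ≤ ((n:ℝ)+2) * ‖F x - F y‖ := by
          have h1 := norm_le_pi_norm (F x - F y) k
          rw [Real.norm_eq_abs] at h1
          have := le_abs_self ((F x - F y) k)
          nlinarith
  refine ⟨?_, ?_⟩
  · -- injectivity
    intro x hx y hy hxy
    have := lip x hx y hy
    rw [hxy, sub_self, norm_zero, mul_zero] at this
    have : ‖x - y‖ = 0 := le_antisymm this (norm_nonneg _)
    exact sub_eq_zero.mp (norm_eq_zero.mp this)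
  · intro x hx
    have hunit : IsUnit (F' x) := by
      rw [Matrix.isUnit_iff_isUnit_det, isUnit_iff_ne_zero]
      intro hdet
      obtain ⟨v, hv0, hv⟩ := (Matrix.exists_mulVec_eq_zero_iff).mpr hdet
      have := bound x hx v
      rw [hv, norm_zero, mul_zero] at this
      exact hv0 (norm_eq_zero.mp (le_antisymm this (norm_nonneg _)))
    refine ⟨hunit, fun y hy => lip x hx y hy, ?_⟩
    intro d
    have hdet : IsUnit (F' x).det := (Matrix.isUnit_iff_isUnit_det _).mp hunit
    have hid : (F' x).mulVec ((F' x)⁻¹.mulVec d) = d := by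
      rw [Matrix.mulVec_mulVec, Matrix.mul_nonsing_inv _ hdet, Matrix.one_mulVec]
    have := bound x hx ((F' x)⁻¹.mulVec d)
    rwa [hid] at this
end

section
/- Let F : U ⊆ ℝⁿ → ℝⁿ, n ≥ 2, be monotonic and convex on a convex open set U ⊇ [−2, n(n+3)]ⁿ. Then for every j ∈ {1,…,n} and x ∈ [−1,n]ⁿ, with z⁽ʲ⁾ := −2eⱼ + n(n+3)eⱼ' and d⁽ʲ⁾ := eⱼ − (n²+3n+1)eⱼ', one has F'(x)(eⱼ − n eⱼ') ≥ (1/(n+2)) F'(z⁽ʲ⁾) d⁽ʲ⁾ entrywise. -/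
open Matrix Set

lemma mulVec_mono_aux_s14 {n : ℕ} {M : Matrix (Fin n) (Fin n) ℝ} (hM : ∀ k j, 0 ≤ M k j)
    {u v : Fin n → ℝ} (huv : u ≤ v) : M.mulVec u ≤ M.mulVec v := by
  intro k
  simp only [Matrix.mulVec, dotProduct]
  exact Finset.sum_le_sum fun i _ => mul_le_mul_of_nonneg_left (huv i) (hM k i)

theorem stmt_14 (n : ℕ) (hn : 2 ≤ n)
    (U : Set (Fin n → ℝ)) (hUopen : IsOpen U) (hUconv : Convex ℝ U)
    (hUsub : Set.Icc (fun _ => (-2:ℝ)) (fun _ => (n:ℝ) * ((n:ℝ) + 3)) ⊆ U)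
    (F : (Fin n → ℝ) → (Fin n → ℝ))
    (F' : (Fin n → ℝ) → Matrix (Fin n) (Fin n) ℝ)
    (hderiv : ∀ z ∈ U, HasFDerivAt F ((F' z).mulVecLin.toContinuousLinearMap) z)
    (hmono : ∀ z ∈ U, ∀ k j, 0 ≤ F' z k j)
    (hconv : ∀ z ∈ U, ∀ w ∈ U, (F' z).mulVec (w - z) ≤ F w - F z) :
    ∀ j : Fin n, ∀ x ∈ Set.Icc (fun _ => (-1:ℝ)) (fun _ => (n:ℝ)),
      ((n:ℝ) + 2)⁻¹ •
        ((F' (fun i => if i = j then -2 else (n:ℝ) * ((n:ℝ) + 3))).mulVec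
          (fun i => if i = j then 1 else -((n:ℝ)^2 + 3 * n + 1)))
      ≤ (F' x).mulVec (fun i => if i = j then 1 else -(n:ℝ)) := by
  intro j x hx
  have hn' : (2:ℝ) ≤ (n:ℝ) := by exact_mod_cast hn
  set z : Fin n → ℝ := fun i => if i = j then -2 else (n:ℝ) * ((n:ℝ) + 3) with hzdef
  set d : Fin n → ℝ := fun i => if i = j then 1 else -((n:ℝ)^2 + 3 * n + 1) with hddef
  set w : Fin n → ℝ := fun i => if i = j then 1 else -(n:ℝ) with hwdef
  have hn2 : (0:ℝ) < (n:ℝ) + 2 := by linarith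
  obtain ⟨hx1, hx2⟩ := hx
  have hzU : z ∈ U := by
    apply hUsub
    constructor <;> intro i <;> simp only [hzdef] <;> split_ifs <;> nlinarith
  have hxU : x ∈ U := by
    apply hUsub
    constructor <;> intro i
    · have := hx1 i; simp only at this ⊢; linarith
    · have := hx2 i; simp only at this ⊢; nlinarith
  have hdx : d ≤ x - z := by
    intro i
    have h1 := hx1 i
    have h2 := hx2 i
    simp only [Pi.sub_apply, hddef, hzdef]
    split_ifs <;> simp only at h1 h2 <;> nlinarith
  have hxz : x - z ≤ ((n:ℝ) + 2) • w := by
    intro i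
    have h1 := hx1 i
    have h2 := hx2 i
    simp only [Pi.sub_apply, Pi.smul_apply, smul_eq_mul, hwdef, hzdef]
    split_ifs <;> simp only at h1 h2 <;> nlinarith
  have h1 : (F' z).mulVec d ≤ (F' z).mulVec (x - z) :=
    mulVec_mono_aux_s14 (hmono z hzU) hdx
  have h2 : (F' z).mulVec (x - z) ≤ F x - F z := hconv z hzU x hxU
  have h3 : (F' x).mulVec (z - x) ≤ F z - F x := hconv x hxU z hzU
  have h4 : (F' x).mulVec (x - z) ≤ (F' x).mulVec (((n:ℝ) + 2) • w) :=
    mulVec_mono_aux_s14 (hmono x hxU) hxz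
  have hneg : (F' x).mulVec (z - x) = -((F' x).mulVec (x - z)) := by
    rw [← neg_sub x z, Matrix.mulVec_neg]
  have hsmul : (F' x).mulVec (((n:ℝ) + 2) • w) = ((n:ℝ) + 2) • (F' x).mulVec w := by
    rw [Matrix.mulVec_smul]
  have key : (F' z).mulVec d ≤ ((n:ℝ) + 2) • (F' x).mulVec w := by
    intro k
    have e1 := h1 k
    have e2 := h2 k
    have e3 := h3 k
    have e4 := h4 k
    have e5 : (F' x).mulVec (z - x) k = -((F' x).mulVec (x - z) k) := by
      rw [hneg]; rfl
    rw [hsmul] at e4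
    simp only [Pi.sub_apply] at e2 e3
    linarith [e1, e2, e3, e4, e5.le, e5.ge]
  have := smul_le_smul_of_nonneg_left key (inv_nonneg.mpr hn2.le)
  rwa [smul_smul, inv_mul_cancel₀ hn2.ne', one_smul] at this
end

section
/- Let F : U ⊆ ℝⁿ → ℝⁿ, n ≥ 2, be continuously differentiable, pointwise convex and monotonic on a convex open set U ⊇ [−2,n(n+3)]ⁿ, satisfying F'(−2eⱼ + n(n+3)eⱼ')(eⱼ − (n²+3n+1)eⱼ') ≰ 0 for all j, and F(0) ≤ 0 ≤ F(𝟙). Then there exists a unique x̂ ∈ (−1/(n−1), 1+1/(n−1))ⁿ with F(x̂) = 0, and x̂ is the only zero of F in [−1,n]ⁿ. Moreover, the Newton iteration x⁽ᵏ⁺¹⁾ := x⁽ᵏ⁾ − F'(x⁽ᵏ⁾)⁻¹F(x⁽ᵏ⁾) with x⁽⁰⁾ := 𝟙 is well defined, stays in (−1,n)ⁿ, satisfies 0 ≤ Mx̂ ≤ Mx⁽ᵏ⁺¹⁾ ≤ Mx⁽ᵏ⁾ ≤ Mx⁽⁰⁾ = (n+1)𝟙 with M = 𝟙𝟙ᵀ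 + Iₙ, and converges to x̂. -/
open Matrix Set Filter Finset

def Dom (n : ℕ) (A : Matrix (Fin n) (Fin n) ℝ) : Prop :=
  (∀ k j, 0 ≤ A k j) ∧ ∀ j, ∃ k, (n:ℝ) * (∑ l ∈ Finset.univ.erase j, A k l) < A k j

lemma dom_S {n : ℕ} (hn : 2 ≤ n) {A : Matrix (Fin n) (Fin n) ℝ} (hA : Dom n A)
    {y : Fin n → ℝ} (hy : 0 ≤ A.mulVec y) {i : Fin n} (hyi : y i < 0) :
    ∃ j, (n:ℝ) * (-(y i)) < y j := by
  obtain ⟨k, hk⟩ := hA.2 i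
  have hne : (Finset.univ : Finset (Fin n)).Nonempty := ⟨i, Finset.mem_univ i⟩
  obtain ⟨j, -, hju⟩ := Finset.exists_mem_eq_sup' hne y
  set u := Finset.univ.sup' hne y with hu
  refine ⟨j, ?_⟩
  rw [← hju]
  have h0 : 0 ≤ ∑ l, A k l * y l := hy k
  have hsplit : ∑ l, A k l * y l = A k i * y i + ∑ l ∈ Finset.univ.erase i, A k l * y l := by
    rw [← Finset.add_sum_erase _ _ (Finset.mem_univ i)]
  set T := ∑ l ∈ Finset.univ.erase i, A k l with hT
  have hT0 : 0 ≤ T := Finset.sum_nonneg fun l _ => hA.1 k l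
  have hsum_le : ∑ l ∈ Finset.univ.erase i, A k l * y l ≤ T * u := by
    rw [hT, Finset.sum_mul]
    refine Finset.sum_le_sum fun l _ => ?_
    exact mul_le_mul_of_nonneg_left (Finset.le_sup' y (Finset.mem_univ l)) (hA.1 k l)
  have hmain : A k i * (-(y i)) ≤ T * u := by nlinarith [h0, hsplit, hsum_le]
  rcases eq_or_lt_of_le hT0 with hT0' | hTpos
  · exfalso
    have : ∑ l ∈ Finset.univ.erase i, A k l * y l = 0 := by
      have hz : ∀ l ∈ Finset.univ.erase i, A k l = 0 := by
        intro l hl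
        have := (Finset.sum_eq_zero_iff_of_nonneg (fun l _ => hA.1 k l)).mp hT0'.symm
        exact this l hl
      exact Finset.sum_eq_zero fun l hl => by rw [hz l hl, zero_mul]
    have hAki : 0 < A k i := lt_of_le_of_lt (by nlinarith [hT0]) hk
    nlinarith [h0, hsplit]
  · have hAki : (n:ℝ) * T < A k i := hk
    nlinarith [hmain, hTpos, hyi, hAki]

lemma dom_ker {n : ℕ} (hn : 2 ≤ n) {A : Matrix (Fin n) (Fin n) ℝ} (hA : Dom n A)
    {y : Fin n → ℝ} (hy : A.mulVec y = 0) : y = 0 := by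
  have hn1 : (0:ℕ) < n := by omega
  have hne : (Finset.univ : Finset (Fin n)).Nonempty := ⟨⟨0, hn1⟩, Finset.mem_univ _⟩
  obtain ⟨q, -, hq⟩ := Finset.exists_max_image Finset.univ (fun l => |y l|) hne
  have hge : 0 ≤ A.mulVec y := hy.ge
  have hle : A.mulVec (-y) = 0 := by rw [Matrix.mulVec_neg, hy, neg_zero]
  have hnR : (2:ℝ) ≤ (n:ℝ) := by exact_mod_cast hn
  funext i
  have hyq : y q = 0 := by
    rcases lt_trichotomy (y q) 0 with h | h | h
    · obtain ⟨j, hj⟩ := dom_S hn hA hge h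
      have := hq j (Finset.mem_univ j)
      have h1 : y j ≤ |y q| := (le_abs_self _).trans this
      rw [abs_of_neg h] at h1
      nlinarith
    · exact h
    · obtain ⟨j, hj⟩ := dom_S hn hA hle.ge (show (-y) q < 0 by simpa using h)
      have := hq j (Finset.mem_univ j)
      have h1 : -y j ≤ |y q| := (neg_le_abs _).trans this
      rw [abs_of_pos h] at h1
      simp only [Pi.neg_apply] at hj
      nlinarith
  have := hq i (Finset.mem_univ i)
  rw [hyq, abs_zero] at this
  have := abs_nonneg (y i)
  have : |y i| = 0 := le_antisymm (hq i (Finset.mem_univ i) |>.trans (by rw [hyq, abs_zero])) this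
  simpa using this

lemma dom_isUnit {n : ℕ} (hn : 2 ≤ n) {A : Matrix (Fin n) (Fin n) ℝ} (hA : Dom n A) :
    IsUnit A := by
  rw [Matrix.isUnit_iff_isUnit_det, isUnit_iff_ne_zero]
  intro hdet
  obtain ⟨v, hv, hv0⟩ := (Matrix.exists_mulVec_eq_zero_iff).mpr hdet
  exact hv (dom_ker hn hA hv0)

-- sum over erase ≥ (n-1) * min
lemma sum_ge_min {n : ℕ} (hn : 2 ≤ n) (y : Fin n → ℝ) {m : ℝ} (hm : ∀ l, m ≤ y l)
    (j : Fin n) : ((n:ℝ) - 1) * m ≤ ∑ l ∈ Finset.univ.erase j, y l := by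
  have hcard : (Finset.univ.erase j).card = n - 1 := by
    rw [Finset.card_erase_of_mem (Finset.mem_univ j), Finset.card_univ, Fintype.card_fin]
  have := Finset.card_nsmul_le_sum (Finset.univ.erase j) y m (fun l _ => hm l)
  rw [hcard] at this
  have hcast : ((n - 1 : ℕ) : ℝ) = (n:ℝ) - 1 := by
    push_cast [Nat.cast_sub (by omega : 1 ≤ n)]; ring
  calc ((n:ℝ) - 1) * m = ((n-1:ℕ):ℝ) * m := by rw [hcast]
    _ = (n-1:ℕ) • m := by rw [nsmul_eq_mul]
    _ ≤ _ := this

lemma dom_Mpos {n : ℕ} (hn : 2 ≤ n) {A : Matrix (Fin n) (Fin n) ℝ} (hA : Dom n A)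
    {y : Fin n → ℝ} (hy : 0 ≤ A.mulVec y) (i : Fin n) : 0 ≤ y i + ∑ l, y l := by
  have hne : (Finset.univ : Finset (Fin n)).Nonempty := ⟨i, Finset.mem_univ i⟩
  obtain ⟨p, -, hp⟩ := Finset.exists_min_image Finset.univ y hne
  rcases le_or_gt 0 (y p) with h | h
  · have : 0 ≤ ∑ l, y l := Finset.sum_nonneg fun l _ => (h.trans (hp l (Finset.mem_univ l)))
    have := h.trans (hp i (Finset.mem_univ i))
    linarith
  · obtain ⟨j, hj⟩ := dom_S hn hA hy h
    have hsplit : ∑ l, y l = y j + ∑ l ∈ Finset.univ.erase j, y l := by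
      rw [← Finset.add_sum_erase _ _ (Finset.mem_univ j)]
    have hrest : ((n:ℝ) - 1) * y p ≤ ∑ l ∈ Finset.univ.erase j, y l :=
      sum_ge_min hn y (fun l => hp l (Finset.mem_univ l)) j
    have hip := hp i (Finset.mem_univ i)
    have hnR : (2:ℝ) ≤ (n:ℝ) := by exact_mod_cast hn
    nlinarith [hj, hip, hrest, hsplit]

-- main bounds: A y >= 0, 0 <= My <= n+1 entrywise  ⇒  -1 < y i < n
lemma dom_bounds {n : ℕ} (hn : 2 ≤ n) {A : Matrix (Fin n) (Fin n) ℝ} (hA : Dom n A)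
    {y : Fin n → ℝ} (hy : 0 ≤ A.mulVec y)
    (hMl : ∀ i, 0 ≤ y i + ∑ l, y l) (hMu : ∀ i, y i + ∑ l, y l ≤ (n:ℝ) + 1) :
    ∀ i, -1 < y i ∧ y i < (n:ℝ) := by
  have hnR : (2:ℝ) ≤ (n:ℝ) := by exact_mod_cast hn
  have hne : (Finset.univ : Finset (Fin n)).Nonempty := ⟨⟨0, by omega⟩, Finset.mem_univ _⟩
  obtain ⟨m, -, hmu⟩ := Finset.exists_max_image Finset.univ y hne
  obtain ⟨p, -, hpl⟩ := Finset.exists_min_image Finset.univ y hne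
  set u := y m
  -- upper bound : u < n
  have hun : u < (n:ℝ) := by
    have hsplit : ∑ l, y l = y m + ∑ l ∈ Finset.univ.erase m, y l := by
      rw [← Finset.add_sum_erase _ _ (Finset.mem_univ m)]
    have hrest : ((n:ℝ) - 1) * y p ≤ ∑ l ∈ Finset.univ.erase m, y l :=
      sum_ge_min hn y (fun l => hpl l (Finset.mem_univ l)) m
    have hMm := hMu m
    rcases le_or_gt 0 (y p) with h | h
    · nlinarith [hsplit, hrest, hMm, hpl m (Finset.mem_univ m)]
    · obtain ⟨j, hj⟩ := dom_S hn hA hy h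
      have hju : y j ≤ u := hmu j (Finset.mem_univ j)
      -- n * (-y p) < y j ≤ u  so  y p > -u/n
      nlinarith [hsplit, hrest, hMm, hj, hju, hpl m (Finset.mem_univ m)]
  intro i
  constructor
  · rcases le_or_gt 0 (y i) with h | h
    · linarith
    · obtain ⟨j, hj⟩ := dom_S hn hA hy h
      have hju : y j ≤ u := hmu j (Finset.mem_univ j)
      nlinarith
  · exact lt_of_le_of_lt (hmu i (Finset.mem_univ i)) hun

-- refined bounds for the zero
lemma dom_refined {n : ℕ} (hn : 2 ≤ n) {A1 A2 : Matrix (Fin n) (Fin n) ℝ}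
    (hA1 : Dom n A1) (hA2 : Dom n A2) {y : Fin n → ℝ}
    (hy2 : 0 ≤ A2.mulVec y) (hy1 : 0 ≤ A1.mulVec (1 - y)) :
    ∀ i, -(1 / ((n:ℝ) - 1)) < y i ∧ y i < 1 + 1 / ((n:ℝ) - 1) := by
  have hnR : (2:ℝ) ≤ (n:ℝ) := by exact_mod_cast hn
  have hn1 : (0:ℝ) < (n:ℝ) - 1 := by linarith
  have hne : (Finset.univ : Finset (Fin n)).Nonempty := ⟨⟨0, by omega⟩, Finset.mem_univ _⟩
  obtain ⟨m, -, hmu⟩ := Finset.exists_max_image Finset.univ y hne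
  obtain ⟨p, -, hpl⟩ := Finset.exists_min_image Finset.univ y hne
  set u := y m
  have hun : u < 1 + 1 / ((n:ℝ) - 1) := by
    rcases le_or_gt u 1 with h | h
    · have : 0 < 1 / ((n:ℝ)-1) := by positivity
      linarith
    · have h1m : (1 - y) m < 0 := by simp [u] at h ⊢; linarith
      obtain ⟨j, hj⟩ := dom_S hn hA1 hy1 h1m
      simp only [Pi.sub_apply, Pi.one_apply] at hj
      -- n * (y m - 1) < 1 - y j ≤ 1 - y p
      have hjp : y p ≤ y j := hpl j (Finset.mem_univ j)
      rcases le_or_gt 0 (y p) with h2 | h2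
      · rw [show (1:ℝ) + 1/((n:ℝ)-1) = ((n:ℝ))/((n:ℝ)-1) by field_simp; ring]
        rw [lt_div_iff₀ hn1]
        nlinarith
      · obtain ⟨j', hj'⟩ := dom_S hn hA2 hy2 h2
        have hju : y j' ≤ u := hmu j' (Finset.mem_univ j')
        rw [show (1:ℝ) + 1/((n:ℝ)-1) = ((n:ℝ))/((n:ℝ)-1) by field_simp; ring]
        rw [lt_div_iff₀ hn1]
        nlinarith
  intro i
  refine ⟨?_, lt_of_le_of_lt (hmu i (Finset.mem_univ i)) hun⟩
  rcases le_or_gt 0 (y i) with h | h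
  · have : 0 < 1 / ((n:ℝ)-1) := by positivity
    linarith
  · obtain ⟨j, hj⟩ := dom_S hn hA2 hy2 h
    have hju : y j ≤ u := hmu j (Finset.mem_univ j)
    have hu' : u < ((n:ℝ))/((n:ℝ)-1) := by
      rw [show (1:ℝ) + 1/((n:ℝ)-1) = ((n:ℝ))/((n:ℝ)-1) by field_simp; ring] at hun; exact hun
    have h3 : (n:ℝ) * (-(y i)) < (n:ℝ)/((n:ℝ)-1) := by linarith
    have h4 : (n:ℝ) * (-(y i)) * ((n:ℝ)-1) < (n:ℝ) := (lt_div_iff₀ hn1).mp h3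
    have hnpos : (0:ℝ) < (n:ℝ) := by linarith
    rw [neg_lt]
    have goal2 : -(y i) * ((n:ℝ)-1) < 1 := by nlinarith [h4, hnpos]
    rw [lt_div_iff₀ hn1]
    exact goal2


lemma dom_at (n : ℕ) (hn : 2 ≤ n)
    (U : Set (Fin n → ℝ))
    (hUsub : Set.Icc (fun _ => (-2:ℝ)) (fun _ => (n:ℝ) * ((n:ℝ) + 3)) ⊆ U)
    (F : (Fin n → ℝ) → (Fin n → ℝ))
    (F' : (Fin n → ℝ) → Matrix (Fin n) (Fin n) ℝ)
    (hmono : ∀ z ∈ U, ∀ k j, 0 ≤ F' z k j)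
    (hconv : ∀ z ∈ U, ∀ w ∈ U, (F' z).mulVec (w - z) ≤ F w - F z)
    (hcrit : ∀ j : Fin n, ∃ k : Fin n,
      0 < ((F' (fun i => if i = j then -2 else (n:ℝ) * ((n:ℝ) + 3))).mulVec
            (fun i => if i = j then 1 else -((n:ℝ)^2 + 3 * n + 1))) k)
    {z : Fin n → ℝ} (hz : z ∈ Set.Icc (fun _ => (-1:ℝ)) (fun _ => (n:ℝ))) :
    Dom n (F' z) := by
  have hnR : (2:ℝ) ≤ (n:ℝ) := by exact_mod_cast hn
  have hzl : ∀ i, (-1:ℝ) ≤ z i := fun i => hz.1 i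
  have hzu : ∀ i, z i ≤ (n:ℝ) := fun i => hz.2 i
  have hzU : z ∈ U := hUsub ⟨fun i => by have := hzl i; simp; linarith,
                             fun i => by have := hzu i; simp; nlinarith⟩
  refine ⟨hmono z hzU, fun j => ?_⟩
  set zj : Fin n → ℝ := fun i => if i = j then -2 else (n:ℝ) * ((n:ℝ) + 3) with hzj
  have hzjU : zj ∈ U := hUsub ⟨fun i => by by_cases h : i = j <;> simp [zj, h] <;> nlinarith,
                               fun i => by by_cases h : i = j <;> simp [zj, h] <;> nlinarith⟩
  obtain ⟨k, hk⟩ := hcrit j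
  refine ⟨k, ?_⟩
  -- convexity both ways, component k
  have h1 := hconv z hzU zj hzjU k
  have h2 := hconv zj hzjU z hzU k
  have hadd : ((F' z).mulVec (zj - z)) k ≤ ((F' zj).mulVec (zj - z)) k := by
    have : ((F' zj).mulVec (z - zj)) k = -(((F' zj).mulVec (zj - z)) k) := by
      rw [show z - zj = -(zj - z) by ring, Matrix.mulVec_neg]; rfl
    simp only [Pi.sub_apply] at h1 h2
    rw [this] at h2; linarith
  -- expand hk
  have hkexp : 0 < F' zj k j - ((n:ℝ)^2 + 3*n + 1) * ∑ l ∈ Finset.univ.erase j, F' zj k l := by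
    have : ((F' zj).mulVec (fun i => if i = j then 1 else -((n:ℝ)^2 + 3 * n + 1))) k
        = F' zj k j * 1 + ∑ l ∈ Finset.univ.erase j, F' zj k l * (-((n:ℝ)^2 + 3*n+1)) := by
      rw [Matrix.mulVec, dotProduct, ← Finset.add_sum_erase _ _ (Finset.mem_univ j)]
      simp only [if_pos rfl]
      congr 1
      refine Finset.sum_congr rfl fun l hl => ?_
      rw [if_neg (Finset.mem_erase.mp hl).1]
    rw [this] at hk
    rw [← Finset.sum_mul] at hk
    nlinarith [hk]
  -- bound RHS of hadd
  have hRHS : ((F' zj).mulVec (zj - z)) k ≤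
      -(F' zj k j) + ((n:ℝ)^2 + 3*n + 1) * ∑ l ∈ Finset.univ.erase j, F' zj k l := by
    rw [Matrix.mulVec, dotProduct, ← Finset.add_sum_erase _ _ (Finset.mem_univ j)]
    have hterm1 : F' zj k j * (zj - z) j ≤ -(F' zj k j) := by
      have : (zj - z) j = -2 - z j := by simp [zj]
      rw [this]
      have := hmono zj hzjU k j
      nlinarith [hzl j]
    have hterm2 : ∑ l ∈ Finset.univ.erase j, F' zj k l * (zj - z) l ≤
        ∑ l ∈ Finset.univ.erase j, F' zj k l * ((n:ℝ)^2 + 3*n + 1) := by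
      refine Finset.sum_le_sum fun l hl => ?_
      have hlj := (Finset.mem_erase.mp hl).1
      have : (zj - z) l = (n:ℝ)*((n:ℝ)+3) - z l := by simp [zj, hlj]
      rw [this]
      have := hmono zj hzjU k l
      nlinarith [hzl l]
    rw [← Finset.sum_mul] at hterm2
    linarith
  have hneg : ((F' z).mulVec (zj - z)) k < 0 := by
    calc ((F' z).mulVec (zj - z)) k ≤ _ := hadd
      _ ≤ _ := hRHS
      _ < 0 := by linarith
  -- expand LHS and conclude dominance
  have hexp : ((F' z).mulVec (zj - z)) k = F' z k j * (-2 - z j)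
      + ∑ l ∈ Finset.univ.erase j, F' z k l * ((n:ℝ)*((n:ℝ)+3) - z l) := by
    rw [Matrix.mulVec, dotProduct, ← Finset.add_sum_erase _ _ (Finset.mem_univ j)]
    congr 1
    · congr 1; simp [zj]
    · refine Finset.sum_congr rfl fun l hl => ?_
      congr 1; simp [zj, (Finset.mem_erase.mp hl).1]
  rw [hexp] at hneg
  set T := ∑ l ∈ Finset.univ.erase j, F' z k l with hT
  have hT0 : 0 ≤ T := Finset.sum_nonneg fun l _ => hmono z hzU k l
  have hterm2' : ∑ l ∈ Finset.univ.erase j, F' z k l * ((n:ℝ)*((n:ℝ)+3) - z l) ≥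
      T * ((n:ℝ)^2 + 2*(n:ℝ)) := by
    rw [hT, Finset.sum_mul]
    refine Finset.sum_le_sum fun l hl => ?_
    have := hmono z hzU k l
    nlinarith [hzu l]
  -- F' z k j * (2 + z j) > T*(n^2+2n), 2 + z j ≤ n + 2, so (n+2) * F' z k j > n(n+2) T
  have hd : F' z k j * (2 + z j) > T * ((n:ℝ)^2 + 2*n) := by nlinarith [hneg, hterm2']
  have hAkj : 0 < F' z k j := by
    have h1 : 0 ≤ T * ((n:ℝ)^2+2*n) := by nlinarith [hT0]
    have h2 : 0 < 2 + z j := by have := hzl j; linarith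
    nlinarith [hd, hmono z hzU k j]
  have h2n : 2 + z j ≤ (n:ℝ) + 2 := by have := hzu j; linarith
  -- conclude n*T < F' z k j
  nlinarith [hd, hAkj, h2n, hT0, mul_le_mul_of_nonneg_left h2n (le_of_lt hAkj)]


lemma M_mulVec (n : ℕ) (y : Fin n → ℝ) :
    ((Matrix.of fun _ _ => (1:ℝ)) + 1).mulVec y = fun i => (∑ l, y l) + y i := by
  funext i
  rw [Matrix.add_mulVec, Matrix.one_mulVec]
  simp only [Pi.add_apply]
  congr 1
  simp [Matrix.mulVec, dotProduct]

lemma NM_eq_one (n : ℕ) (hn : 2 ≤ n) :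
    ((1 : Matrix (Fin n) (Fin n) ℝ) - (((n:ℝ)+1)⁻¹) • (Matrix.of fun _ _ => (1:ℝ)))
      * ((Matrix.of fun _ _ => (1:ℝ)) + 1) = 1 := by
  have hnR : (2:ℝ) ≤ (n:ℝ) := by exact_mod_cast hn
  have h1 : ((n:ℝ)+1) ≠ 0 := by linarith
  set N : Matrix (Fin n) (Fin n) ℝ :=
    (1 : Matrix (Fin n) (Fin n) ℝ) - (((n:ℝ)+1)⁻¹) • (Matrix.of fun _ _ => (1:ℝ)) with hN
  set MM : Matrix (Fin n) (Fin n) ℝ := (Matrix.of fun _ _ => (1:ℝ)) + 1 with hMM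
  ext i j
  rw [Matrix.mul_apply]
  have key : ∀ k, N i k * MM k j
      = ((if i = k then (1:ℝ) else 0) - ((n:ℝ)+1)⁻¹) * (1 + if k = j then (1:ℝ) else 0) := by
    intro k
    rw [hN, hMM]
    rcases eq_or_ne i k with h1 | h1 <;> rcases eq_or_ne k j with h2 | h2 <;>
      simp [Matrix.sub_apply, Matrix.add_apply, Matrix.one_apply, Matrix.smul_apply, h1, h2] <;>
      (try ring)
  rw [Finset.sum_congr rfl (fun k _ => key k)]
  simp only [sub_mul, mul_add, mul_one, Finset.sum_sub_distrib, Finset.sum_add_distrib,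
    Finset.sum_ite_eq, Finset.sum_ite_eq', Finset.mem_univ, if_true,
    Finset.sum_const, Finset.card_univ, Fintype.card_fin, nsmul_eq_mul]
  by_cases h : i = j
  · subst h; simp [Matrix.one_apply]; field_simp; ring
  · simp [Matrix.one_apply, h, Ne.symm h]; field_simp; try ring


theorem stmt_15 (n : ℕ) (hn : 2 ≤ n)
    (U : Set (Fin n → ℝ)) (hUopen : IsOpen U) (hUconv : Convex ℝ U)
    (hUsub : Set.Icc (fun _ => (-2:ℝ)) (fun _ => (n:ℝ) * ((n:ℝ) + 3)) ⊆ U)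
    (F : (Fin n → ℝ) → (Fin n → ℝ))
    (F' : (Fin n → ℝ) → Matrix (Fin n) (Fin n) ℝ)
    (hderiv : ∀ z ∈ U, HasFDerivAt F ((F' z).mulVecLin.toContinuousLinearMap) z)
    (hcont : ContinuousOn F' U)
    (hmono : ∀ z ∈ U, ∀ k j, 0 ≤ F' z k j)
    (hconv : ∀ z ∈ U, ∀ w ∈ U, (F' z).mulVec (w - z) ≤ F w - F z)
    (hcrit : ∀ j : Fin n, ∃ k : Fin n,
      0 < ((F' (fun i => if i = j then -2 else (n:ℝ) * ((n:ℝ) + 3))).mulVec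
            (fun i => if i = j then 1 else -((n:ℝ)^2 + 3 * n + 1))) k)
    (hF0 : F 0 ≤ 0) (hF1 : 0 ≤ F 1)
    (M : Matrix (Fin n) (Fin n) ℝ)
    (hM : M = (Matrix.of fun _ _ => (1:ℝ)) + 1) :
    ∃ xhat : Fin n → ℝ,
      (∀ i, -(1 / ((n:ℝ) - 1)) < xhat i ∧ xhat i < 1 + 1 / ((n:ℝ) - 1)) ∧
      F xhat = 0 ∧
      (∀ z ∈ Set.Icc (fun _ => (-1:ℝ)) (fun _ => (n:ℝ)), F z = 0 → z = xhat) ∧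
      ∀ x : ℕ → (Fin n → ℝ), x 0 = 1 →
        (∀ k, x (k + 1) = x k - ((F' (x k))⁻¹).mulVec (F (x k))) →
        (∀ k, IsUnit (F' (x k)) ∧
          (∀ i, -1 < x k i ∧ x k i < (n:ℝ)) ∧
          0 ≤ M.mulVec xhat ∧
          M.mulVec xhat ≤ M.mulVec (x (k + 1)) ∧
          M.mulVec (x (k + 1)) ≤ M.mulVec (x k)) ∧
        M.mulVec (x 0) = (fun _ => (n:ℝ) + 1) ∧
        Tendsto x atTop (nhds xhat) := by
  subst hM
  have hnR : (2:ℝ) ≤ (n:ℝ) := by exact_mod_cast hn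
  have hn1 : (0:ℝ) < (n:ℝ) + 1 := by linarith
  set M : Matrix (Fin n) (Fin n) ℝ := (Matrix.of fun _ _ => (1:ℝ)) + 1 with hMdef
  set N : Matrix (Fin n) (Fin n) ℝ :=
    (1 : Matrix (Fin n) (Fin n) ℝ) - (((n:ℝ)+1)⁻¹) • (Matrix.of fun _ _ => (1:ℝ)) with hNdef
  have hNM : N * M = 1 := NM_eq_one n hn
  have hMN : M * N = 1 := mul_eq_one_comm.mp hNM
  have hMv : ∀ y : Fin n → ℝ, M.mulVec y = fun i => (∑ l, y l) + y i := M_mulVec n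
  have hyrec : ∀ y : Fin n → ℝ, N.mulVec (M.mulVec y) = y := by
    intro y; rw [Matrix.mulVec_mulVec, hNM, Matrix.one_mulVec]
  have hbox : ∀ z ∈ Set.Icc (fun _ => (-1:ℝ)) (fun _ => (n:ℝ)), z ∈ U := by
    intro z hz
    refine hUsub ⟨fun i => ?_, fun i => ?_⟩
    · have := hz.1 i; simp only at this ⊢; linarith
    · have := hz.2 i; simp only at this ⊢; nlinarith
  have hIcc : ∀ z : Fin n → ℝ, (∀ i, -1 ≤ z i ∧ z i ≤ (n:ℝ)) →
      z ∈ Set.Icc (fun _ => (-1:ℝ)) (fun _ => (n:ℝ)) :=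
    fun z hz => ⟨fun i => (hz i).1, fun i => (hz i).2⟩
  have h0Icc : (0 : Fin n → ℝ) ∈ Set.Icc (fun _ => (-1:ℝ)) (fun _ => (n:ℝ)) :=
    hIcc 0 (fun i => by constructor <;> simp <;> linarith)
  have h1Icc : (1 : Fin n → ℝ) ∈ Set.Icc (fun _ => (-1:ℝ)) (fun _ => (n:ℝ)) :=
    hIcc 1 (fun i => by constructor <;> simp <;> linarith)
  have h0U : (0 : Fin n → ℝ) ∈ U := hbox 0 h0Icc
  have h1U : (1 : Fin n → ℝ) ∈ U := hbox 1 h1Icc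
  have hdom : ∀ z ∈ Set.Icc (fun _ => (-1:ℝ)) (fun _ => (n:ℝ)), Dom n (F' z) :=
    fun z hz => dom_at n hn U hUsub F F' hmono hconv hcrit hz
  have hMpos : ∀ (A : Matrix (Fin n) (Fin n) ℝ) (y : Fin n → ℝ),
      Dom n A → 0 ≤ A.mulVec y → 0 ≤ M.mulVec y := by
    intro A y hA hy
    intro i
    have := dom_Mpos hn hA hy i
    rw [hMv]
    simpa [add_comm] using this
  have hMneg : ∀ (A : Matrix (Fin n) (Fin n) ℝ) (y : Fin n → ℝ),
      Dom n A → A.mulVec y ≤ 0 → M.mulVec y ≤ 0 := by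
    intro A y hA hy
    have h1 : 0 ≤ A.mulVec (-y) := by
      rw [Matrix.mulVec_neg]
      intro i; have := hy i; simp only [Pi.neg_apply, Pi.zero_apply] at this ⊢; linarith
    have := hMpos A (-y) hA h1
    rw [Matrix.mulVec_neg] at this
    intro i; have := this i; simp only [Pi.neg_apply, Pi.zero_apply] at this ⊢; linarith
  -- canonical Newton sequence
  set xs : ℕ → (Fin n → ℝ) := fun k =>
    Nat.rec (motive := fun _ => Fin n → ℝ) (1 : Fin n → ℝ)
      (fun _ xk => xk - ((F' xk)⁻¹).mulVec (F xk)) k with hxs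
  have xs0 : xs 0 = 1 := rfl
  have xsS : ∀ k, xs (k+1) = xs k - ((F' (xs k))⁻¹).mulVec (F (xs k)) := fun k => rfl
  -- invariant step
  have step : ∀ k, ((∀ i, -1 < xs k i ∧ xs k i < (n:ℝ)) ∧ 0 ≤ F (xs k) ∧
        0 ≤ M.mulVec (xs k) ∧ (∀ i, M.mulVec (xs k) i ≤ (n:ℝ)+1)) →
      (((∀ i, -1 < xs (k+1) i ∧ xs (k+1) i < (n:ℝ)) ∧ 0 ≤ F (xs (k+1)) ∧
        0 ≤ M.mulVec (xs (k+1)) ∧ (∀ i, M.mulVec (xs (k+1)) i ≤ (n:ℝ)+1)) ∧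
        M.mulVec (xs (k+1)) ≤ M.mulVec (xs k)) := by
    intro k ⟨hb1, hb2, hb3, hb4⟩
    have hkIcc : xs k ∈ Set.Icc (fun _ => (-1:ℝ)) (fun _ => (n:ℝ)) :=
      hIcc _ (fun i => ⟨(hb1 i).1.le, (hb1 i).2.le⟩)
    have hkU : xs k ∈ U := hbox _ hkIcc
    have hA : Dom n (F' (xs k)) := hdom _ hkIcc
    have hAu : IsUnit (F' (xs k)) := dom_isUnit hn hA
    have hdet : IsUnit (F' (xs k)).det := (Matrix.isUnit_iff_isUnit_det _).mp hAu
    have hstepEq : (F' (xs k)).mulVec (xs (k+1) - xs k) = -(F (xs k)) := by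
      rw [xsS k]
      rw [show xs k - ((F' (xs k))⁻¹).mulVec (F (xs k)) - xs k
          = -(((F' (xs k))⁻¹).mulVec (F (xs k))) by ring]
      rw [Matrix.mulVec_neg, Matrix.mulVec_mulVec, Matrix.mul_nonsing_inv _ hdet,
        Matrix.one_mulVec]
    have hAxk : ∀ i, F (xs k) i - F 0 i ≤ ((F' (xs k)).mulVec (xs k)) i := by
      intro i
      have := hconv (xs k) hkU 0 h0U i
      rw [zero_sub, Matrix.mulVec_neg] at this
      simp only [Pi.neg_apply, Pi.sub_apply] at this
      linarith
    have hAx1 : 0 ≤ (F' (xs k)).mulVec (xs (k+1)) := by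
      intro i
      have h1 : ((F' (xs k)).mulVec (xs (k+1))) i
          = ((F' (xs k)).mulVec (xs k)) i - F (xs k) i := by
        have := congrFun hstepEq i
        rw [Matrix.mulVec_sub] at this
        simp only [Pi.sub_apply, Pi.neg_apply] at this
        linarith
      have h2 := hAxk i
      have h3 := hF0 i
      simp only [Pi.zero_apply] at h3 ⊢
      linarith
    have hMx1pos : 0 ≤ M.mulVec (xs (k+1)) := hMpos _ _ hA hAx1
    have hMdec : M.mulVec (xs (k+1)) ≤ M.mulVec (xs k) := by
      have h1 : (F' (xs k)).mulVec (xs (k+1) - xs k) ≤ 0 := by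
        rw [hstepEq]
        intro i; have := hb2 i; simp only [Pi.neg_apply, Pi.zero_apply] at this ⊢; linarith
      have h2 := hMneg _ _ hA h1
      rw [Matrix.mulVec_sub] at h2
      intro i; have := h2 i; simp only [Pi.sub_apply, Pi.zero_apply] at this ⊢; linarith
    have hMx1up : ∀ i, M.mulVec (xs (k+1)) i ≤ (n:ℝ)+1 :=
      fun i => (hMdec i).trans (hb4 i)
    have hbnds : ∀ i, -1 < xs (k+1) i ∧ xs (k+1) i < (n:ℝ) := by
      refine dom_bounds hn hA hAx1 (fun i => ?_) (fun i => ?_)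
      · have := hMx1pos i; simp only [hMv, Pi.zero_apply] at this; linarith
      · have := hMx1up i; simp only [hMv] at this; linarith
    have h1U' : xs (k+1) ∈ U := hbox _ (hIcc _ (fun i => ⟨(hbnds i).1.le, (hbnds i).2.le⟩))
    have hFx1 : 0 ≤ F (xs (k+1)) := by
      intro i
      have := hconv (xs k) hkU (xs (k+1)) h1U' i
      have h2 := congrFun hstepEq i
      simp only [Pi.sub_apply, Pi.neg_apply, Pi.zero_apply] at this h2 ⊢
      rw [h2] at this
      have := hb2 i
      simp only [Pi.zero_apply] at this
      linarith [hconv (xs k) hkU (xs (k+1)) h1U' i, h2]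
    exact ⟨⟨hbnds, hFx1, hMx1pos, hMx1up⟩, hMdec⟩
  have inv : ∀ k, (∀ i, -1 < xs k i ∧ xs k i < (n:ℝ)) ∧ 0 ≤ F (xs k) ∧
      0 ≤ M.mulVec (xs k) ∧ (∀ i, M.mulVec (xs k) i ≤ (n:ℝ)+1) := by
    intro k
    induction k with
    | zero =>
      have hM1 : M.mulVec (1 : Fin n → ℝ) = fun _ => (n:ℝ)+1 := by
        rw [hMv]; funext i; simp
      refine ⟨fun i => ?_, ?_, ?_, ?_⟩
      · rw [xs0]; constructor <;> simp <;> linarith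
      · rw [xs0]; exact hF1
      · rw [xs0, hM1]; intro i; simp; linarith
      · rw [xs0, hM1]; intro i; simp
    | succ k ih => exact (step k ih).1
  have hdec : ∀ k, M.mulVec (xs (k+1)) ≤ M.mulVec (xs k) := fun k => (step k (inv k)).2
  have hkIcc : ∀ k, xs k ∈ Set.Icc (fun _ => (-1:ℝ)) (fun _ => (n:ℝ)) :=
    fun k => hIcc _ (fun i => ⟨((inv k).1 i).1.le, ((inv k).1 i).2.le⟩)
  have hkU : ∀ k, xs k ∈ U := fun k => hbox _ (hkIcc k)
  have hdomk : ∀ k, Dom n (F' (xs k)) := fun k => hdom _ (hkIcc k)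
  have hunit : ∀ k, IsUnit (F' (xs k)) := fun k => dom_isUnit hn (hdomk k)
  have hstepEq : ∀ k, (F' (xs k)).mulVec (xs (k+1) - xs k) = -(F (xs k)) := by
    intro k
    have hdet : IsUnit (F' (xs k)).det := (Matrix.isUnit_iff_isUnit_det _).mp (hunit k)
    rw [xsS k]
    rw [show xs k - ((F' (xs k))⁻¹).mulVec (F (xs k)) - xs k
        = -(((F' (xs k))⁻¹).mulVec (F (xs k))) by ring]
    rw [Matrix.mulVec_neg, Matrix.mulVec_mulVec, Matrix.mul_nonsing_inv _ hdet,
      Matrix.one_mulVec]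
  -- convergence
  have hanti : ∀ i, Antitone fun k => M.mulVec (xs k) i :=
    fun i => antitone_nat_of_succ_le (fun k => hdec k i)
  have hbdd : ∀ i, BddBelow (Set.range fun k => M.mulVec (xs k) i) := by
    intro i
    exact ⟨0, fun v ⟨k, hk⟩ => hk ▸ (inv k).2.2.1 i⟩
  set b : Fin n → ℝ := fun i => ⨅ k, M.mulVec (xs k) i with hbdef
  have hb : ∀ i, Tendsto (fun k => M.mulVec (xs k) i) atTop (nhds (b i)) :=
    fun i => tendsto_atTop_ciInf (hanti i) (hbdd i)
  have hble : ∀ k, b ≤ M.mulVec (xs k) := by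
    intro k i
    exact ciInf_le (hbdd i) k
  have hb0 : 0 ≤ b := by
    intro i
    exact le_ciInf (fun k => (inv k).2.2.1 i)
  set xhat : Fin n → ℝ := N.mulVec b with hxhatdef
  have hMxhat : M.mulVec xhat = b := by
    rw [hxhatdef, Matrix.mulVec_mulVec, hMN, Matrix.one_mulVec]
  have hMb : Tendsto (fun k => M.mulVec (xs k)) atTop (nhds b) := tendsto_pi_nhds.mpr hb
  have hNcont : Continuous fun v : Fin n → ℝ => N.mulVec v := by
    have h := LinearMap.continuous_of_finiteDimensional (𝕜 := ℝ) N.mulVecLin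
    exact h
  have hxs_tendsto : Tendsto xs atTop (nhds xhat) := by
    have h1 : Tendsto (fun k => N.mulVec (M.mulVec (xs k))) atTop (nhds (N.mulVec b)) :=
      ((hNcont.tendsto b).comp hMb)
    have h2 : (fun k => N.mulVec (M.mulVec (xs k))) = xs := funext fun k => hyrec (xs k)
    rw [h2] at h1
    exact h1
  have hcoord : ∀ i, Tendsto (fun k => xs k i) atTop (nhds (xhat i)) :=
    fun i => ((continuous_apply i).tendsto xhat).comp hxs_tendsto
  have hxhat_box : ∀ i, -1 ≤ xhat i ∧ xhat i ≤ (n:ℝ) := by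
    intro i
    constructor
    · exact ge_of_tendsto (hcoord i) (Eventually.of_forall fun k => ((inv k).1 i).1.le)
    · exact le_of_tendsto (hcoord i) (Eventually.of_forall fun k => ((inv k).1 i).2.le)
  have hxhatIcc : xhat ∈ Set.Icc (fun _ => (-1:ℝ)) (fun _ => (n:ℝ)) := hIcc _ hxhat_box
  have hxhatU : xhat ∈ U := hbox _ hxhatIcc
  -- F xhat = 0
  have hFxhat : F xhat = 0 := by
    have hFtend : Tendsto (fun k => F (xs k)) atTop (nhds (F xhat)) :=
      ((hderiv xhat hxhatU).continuousAt.tendsto).comp hxs_tendsto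
    have hF'tend : Tendsto (fun k => F' (xs k)) atTop (nhds (F' xhat)) :=
      ((hcont.continuousAt (hUopen.mem_nhds hxhatU)).tendsto).comp hxs_tendsto
    have hdtend : Tendsto (fun k => xs k - xs (k+1)) atTop (nhds 0) := by
      have h1 : Tendsto (fun k => xs (k+1)) atTop (nhds xhat) :=
        hxs_tendsto.comp (tendsto_add_atTop_nat 1)
      have := hxs_tendsto.sub h1
      simpa using this
    have hexpr : (fun k => F (xs k)) = fun k => (F' (xs k)).mulVec (xs k - xs (k+1)) := by
      funext k
      rw [show xs k - xs (k+1) = -(xs (k+1) - xs k) by ring, Matrix.mulVec_neg, hstepEq k,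
        neg_neg]
    have htend2 : Tendsto (fun k => (F' (xs k)).mulVec (xs k - xs (k+1))) atTop (nhds 0) := by
      rw [tendsto_pi_nhds]
      intro i
      have hsum : Tendsto (fun k => ∑ j, F' (xs k) i j * (xs k - xs (k+1)) j) atTop
          (nhds (∑ j : Fin n, F' xhat i j * (0:ℝ))) := by
        refine tendsto_finset_sum _ (fun j _ => ?_)
        have hentry : Tendsto (fun k => F' (xs k) i j) atTop (nhds (F' xhat i j)) :=
          tendsto_pi_nhds.mp (tendsto_pi_nhds.mp hF'tend i) j
        have hdj : Tendsto (fun k => (xs k - xs (k+1)) j) atTop (nhds 0) := by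
          have := tendsto_pi_nhds.mp hdtend j
          simpa using this
        simpa using hentry.mul hdj
      simp only [mul_zero, Finset.sum_const_zero] at hsum
      simpa [Matrix.mulVec, dotProduct] using hsum
    rw [hexpr] at hFtend
    exact tendsto_nhds_unique hFtend htend2
  -- refined bounds
  have hdomx : Dom n (F' xhat) := hdom _ hxhatIcc
  have hdom1 : Dom n (F' 1) := hdom _ h1Icc
  have hy2 : 0 ≤ (F' xhat).mulVec xhat := by
    intro i
    have := hconv xhat hxhatU 0 h0U i
    rw [zero_sub, Matrix.mulVec_neg] at this
    have h3 := hF0 i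
    simp only [Pi.neg_apply, Pi.sub_apply, Pi.zero_apply, hFxhat] at this h3 ⊢
    linarith
  have hy1 : 0 ≤ (F' 1).mulVec (1 - xhat) := by
    intro i
    have := hconv 1 h1U xhat hxhatU i
    have h3 := hF1 i
    rw [show (1 : Fin n → ℝ) - xhat = -(xhat - 1) by ring, Matrix.mulVec_neg]
    simp only [Pi.neg_apply, Pi.sub_apply, Pi.zero_apply, hFxhat] at this h3 ⊢
    linarith
  have hrefined := dom_refined hn hdom1 hdomx hy2 hy1
  -- uniqueness
  have huniq : ∀ z ∈ Set.Icc (fun _ => (-1:ℝ)) (fun _ => (n:ℝ)), F z = 0 → z = xhat := by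
    intro z hz hFz
    have hzU := hbox z hz
    have hdomz := hdom z hz
    have h1 : (F' z).mulVec (xhat - z) ≤ 0 := by
      intro i
      have := hconv z hzU xhat hxhatU i
      simp only [Pi.sub_apply, Pi.zero_apply, hFz, hFxhat] at this ⊢
      linarith
    have h2 : (F' xhat).mulVec (z - xhat) ≤ 0 := by
      intro i
      have := hconv xhat hxhatU z hzU i
      simp only [Pi.sub_apply, Pi.zero_apply, hFz, hFxhat] at this ⊢
      linarith
    have hM1 := hMneg _ _ hdomz h1
    have hM2 := hMneg _ _ hdomx h2
    have hMzero : M.mulVec (z - xhat) = 0 := by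
      funext i
      have ha := hM2 i
      have hb2 : 0 ≤ (M.mulVec (z - xhat)) i := by
        have := hM1 i
        rw [show xhat - z = -(z - xhat) by ring, Matrix.mulVec_neg] at this
        simp only [Pi.neg_apply, Pi.zero_apply] at this
        linarith
      simp only [Pi.zero_apply] at ha ⊢
      linarith
    have : z - xhat = 0 := by
      have := hyrec (z - xhat)
      rw [hMzero, Matrix.mulVec_zero] at this
      exact this.symm
    have := sub_eq_zero.mp this
    exact this
  refine ⟨xhat, hrefined, hFxhat, huniq, ?_⟩
  intro x hx0 hxrec
  have hxx : ∀ k, x k = xs k := by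
    intro k
    induction k with
    | zero => rw [hx0, xs0]
    | succ k ih => rw [hxrec k, ih, ← xsS k]
  have hMx0 : M.mulVec (x 0) = fun _ => (n:ℝ)+1 := by
    rw [hx0, hMv]; funext i; simp
  refine ⟨fun k => ?_, hMx0, ?_⟩
  · refine ⟨?_, ?_, ?_, ?_, ?_⟩
    · rw [hxx k]; exact hunit k
    · rw [hxx k]; exact (inv k).1
    · rw [hMxhat]; exact hb0
    · rw [hMxhat, hxx (k+1)]; exact hble (k+1)
    · rw [hxx (k+1), hxx k]; exact hdec k
  · have : x = xs := funext hxx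
    rw [this]
    exact hxs_tendsto
end

section
/- Let Ω ⊂ ℝ^d be a bounded Lipschitz domain, D ⊂⊂ Ω open with Lipschitz boundary Γ = ∂D, Γ₀ ⊆ Γ measurable with positive measure, and γ⁽¹⁾, γ⁽²⁾ ∈ L^∞₊(Γ) with γ⁽¹⁾ = γ⁽²⁾ on Γ∖Γ₀. For g ∈ L²(∂Ω) let u₁, u₂ ∈ H¹(Ω) be the solutions of the Robin transmission problem with coefficients γ⁽¹⁾, γ⁽²⁾ respectively. Then ‖u₂‖_{L²(Γ₀)} ≤ (1 + ‖γ⁽¹⁾−γ⁽²⁾‖_{L^∞(Γ₀)}/inf(γ⁽²⁾|_{Γ₀})) ‖u₁‖_{L²(Γ₀)}. -/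
open MeasureTheory

/-- Cauchy–Schwarz for real integrals. -/
lemma cs_aux {α : Type*} [MeasurableSpace α] {ν : Measure α} {f g : α → ℝ}
    (hf : AEStronglyMeasurable f ν) (hg : AEStronglyMeasurable g ν)
    (hf2 : Integrable (fun s => f s ^ 2) ν) (hg2 : Integrable (fun s => g s ^ 2) ν) :
    ∫ s, |f s| * |g s| ∂ν ≤ Real.sqrt (∫ s, f s ^ 2 ∂ν) * Real.sqrt (∫ s, g s ^ 2 ∂ν) := by
  have hpq : Real.HolderConjugate 2 2 := ⟨by norm_num, by norm_num, by norm_num⟩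
  have h2 : ENNReal.ofReal (2:ℝ) = 2 := by norm_num
  have hmf : MemLp (fun s => |f s|) (ENNReal.ofReal (2:ℝ)) ν := by
    have : AEStronglyMeasurable (fun s => |f s|) ν := by simpa [Real.norm_eq_abs] using hf.norm
    rw [h2, memLp_two_iff_integrable_sq this]
    simpa [sq_abs] using hf2
  have hmg : MemLp (fun s => |g s|) (ENNReal.ofReal (2:ℝ)) ν := by
    have : AEStronglyMeasurable (fun s => |g s|) ν := by simpa [Real.norm_eq_abs] using hg.norm
    rw [h2, memLp_two_iff_integrable_sq this]
    simpa [sq_abs] using hg2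
  have H := integral_mul_le_Lp_mul_Lq_of_nonneg hpq
    (Filter.Eventually.of_forall fun s => abs_nonneg (f s))
    (Filter.Eventually.of_forall fun s => abs_nonneg (g s)) hmf hmg
  have ef : ∫ s, |f s| ^ (2:ℝ) ∂ν = ∫ s, f s ^ 2 ∂ν := by
    apply integral_congr_ae; filter_upwards with s
    rw [show ((2:ℝ) = ((2:ℕ):ℝ)) by norm_num, Real.rpow_natCast, sq_abs]
  have eg : ∫ s, |g s| ^ (2:ℝ) ∂ν = ∫ s, g s ^ 2 ∂ν := by
    apply integral_congr_ae; filter_upwards with s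
    rw [show ((2:ℝ) = ((2:ℕ):ℝ)) by norm_num, Real.rpow_natCast, sq_abs]
  rw [ef, eg] at H
  calc ∫ s, |f s| * |g s| ∂ν ≤ (∫ s, f s ^ 2 ∂ν) ^ (1/(2:ℝ)) * (∫ s, g s ^ 2 ∂ν) ^ (1/(2:ℝ)) := H
    _ = _ := by rw [← Real.sqrt_eq_rpow, ← Real.sqrt_eq_rpow]

set_option maxHeartbeats 1000000 in
/-- Abstract formulation of the Robin transmission problem: `V` plays the role of
`H¹(Ω)`, `B` the Dirichlet bilinear form `∫_Ω ∇u·∇w dx`, `tr` the trace operator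
onto the interface `Γ` (a measure space with measure `μ`), and `ℓ` the Neumann
boundary functional `w ↦ ∫_{∂Ω} g w ds`. The solutions `u₁, u₂` satisfy the
variational formulation with Robin coefficients `γ₁, γ₂` respectively. -/
theorem stmt_17
    {V : Type*} [AddCommGroup V] [Module ℝ V]
    {Γ : Type*} [MeasurableSpace Γ] (μ : Measure Γ)
    (Γ₀ : Set Γ) (hΓ₀meas : MeasurableSet Γ₀) (hΓ₀pos : 0 < μ Γ₀)
    (B : LinearMap.BilinForm ℝ V)
    (hBsymm : ∀ u w : V, B u w = B w u) (hBpos : ∀ u : V, 0 ≤ B u u)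
    (tr : V →ₗ[ℝ] Γ → ℝ) (hTrMeas : ∀ v : V, Measurable (tr v))
    (ℓ : V →ₗ[ℝ] ℝ)
    (γ₁ γ₂ : Γ → ℝ) (hγ₁meas : Measurable γ₁) (hγ₂meas : Measurable γ₂)
    -- γ₁, γ₂ ∈ L^∞₊(Γ): positive essential infima and essentially bounded
    (a₁ a₂ b₁ b₂ : ℝ) (ha₁ : 0 < a₁) (ha₂ : 0 < a₂)
    (hγ₁lb : ∀ᵐ s ∂μ, a₁ ≤ γ₁ s) (hγ₂lb : ∀ᵐ s ∂μ, a₂ ≤ γ₂ s)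
    (hγ₁ub : ∀ᵐ s ∂μ, γ₁ s ≤ b₁) (hγ₂ub : ∀ᵐ s ∂μ, γ₂ s ≤ b₂)
    -- γ₁ = γ₂ on Γ ∖ Γ₀
    (hEq : ∀ᵐ s ∂μ, s ∉ Γ₀ → γ₁ s = γ₂ s)
    -- integrability of the interface terms
    (hInt : ∀ v w : V, Integrable (fun s => tr v s * tr w s) μ)
    (hInt₁ : ∀ v w : V, Integrable (fun s => γ₁ s * (tr v s * tr w s)) μ)
    (hInt₂ : ∀ v w : V, Integrable (fun s => γ₂ s * (tr v s * tr w s)) μ)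
    -- u₁, u₂ solve the variational Robin transmission problems for γ₁, γ₂
    (u₁ u₂ : V)
    (hu₁ : ∀ w : V, B u₁ w + ∫ s, γ₁ s * (tr u₁ s * tr w s) ∂μ = ℓ w)
    (hu₂ : ∀ w : V, B u₂ w + ∫ s, γ₂ s * (tr u₂ s * tr w s) ∂μ = ℓ w) :
    Real.sqrt (∫ s in Γ₀, (tr u₂ s) ^ 2 ∂μ) ≤
      (1 + (essSup (fun s => |γ₁ s - γ₂ s|) (μ.restrict Γ₀)) /
            (essInf γ₂ (μ.restrict Γ₀))) *
        Real.sqrt (∫ s in Γ₀, (tr u₁ s) ^ 2 ∂μ) := by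
  set v : V := u₁ - u₂ with hvdef
  have htv : ∀ s, tr v s = tr u₁ s - tr u₂ s := fun s => by simp [hvdef, map_sub]
  set N₁ := Real.sqrt (∫ s in Γ₀, (tr u₁ s) ^ 2 ∂μ) with hN₁
  set N₂ := Real.sqrt (∫ s in Γ₀, (tr u₂ s) ^ 2 ∂μ) with hN₂
  set Nv := Real.sqrt (∫ s in Γ₀, (tr v s) ^ 2 ∂μ) with hNv
  set δ := essSup (fun s => |γ₁ s - γ₂ s|) (μ.restrict Γ₀) with hδ
  set c := essInf γ₂ (μ.restrict Γ₀) with hc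
  -- basic facts about the restricted measure
  have hνne : μ.restrict Γ₀ ≠ 0 := by
    intro h
    have h2 : (μ.restrict Γ₀) Set.univ = μ Γ₀ := Measure.restrict_apply_univ Γ₀
    rw [h] at h2
    simp at h2
    exact absurd h2.symm (ne_of_gt hΓ₀pos)
  haveI : (ae (μ.restrict Γ₀)).NeBot := ae_neBot.mpr hνne
  have hγ₂lbν : ∀ᵐ s ∂(μ.restrict Γ₀), a₂ ≤ γ₂ s := ae_restrict_of_ae hγ₂lb
  have hγ₂ubν : ∀ᵐ s ∂(μ.restrict Γ₀), γ₂ s ≤ b₂ := ae_restrict_of_ae hγ₂ub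
  have hγ₁lbν : ∀ᵐ s ∂(μ.restrict Γ₀), a₁ ≤ γ₁ s := ae_restrict_of_ae hγ₁lb
  have hγ₁ubν : ∀ᵐ s ∂(μ.restrict Γ₀), γ₁ s ≤ b₁ := ae_restrict_of_ae hγ₁ub
  -- essInf bounds
  have hcge : a₂ ≤ c :=
    Filter.le_liminf_of_le (Filter.isCoboundedUnder_ge_of_eventually_le _ hγ₂ubν) hγ₂lbν
  have hcpos : (0:ℝ) < c := lt_of_lt_of_le ha₂ hcge
  have hcae : ∀ᵐ s ∂(μ.restrict Γ₀), c ≤ γ₂ s :=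
    ae_essInf_le ⟨a₂, by rw [Filter.eventually_map]; exact hγ₂lbν⟩
  -- essSup bounds
  have habs_bound : ∀ᵐ s ∂(μ.restrict Γ₀), |γ₁ s - γ₂ s| ≤ max (b₁ - a₂) (b₂ - a₁) := by
    filter_upwards [hγ₁lbν, hγ₁ubν, hγ₂lbν, hγ₂ubν] with s h1 h2 h3 h4
    rw [abs_sub_le_iff]
    constructor
    · exact le_trans (by linarith) (le_max_left _ _)
    · exact le_trans (by linarith) (le_max_right _ _)
  have hbddsup : Filter.IsBoundedUnder (· ≤ ·) (ae (μ.restrict Γ₀))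
      (fun s => |γ₁ s - γ₂ s|) :=
    ⟨max (b₁ - a₂) (b₂ - a₁), by rw [Filter.eventually_map]; exact habs_bound⟩
  have hδ0 : 0 ≤ δ :=
    Filter.le_limsup_of_frequently_le
      ((Filter.Eventually.of_forall (fun s => abs_nonneg (γ₁ s - γ₂ s))).frequently) hbddsup
  have hδae : ∀ᵐ s ∂(μ.restrict Γ₀), |γ₁ s - γ₂ s| ≤ δ := ae_le_essSup hbddsup
  -- integrability on the restricted measure
  have hf1sq : Integrable (fun s => (tr u₁ s) ^ 2) (μ.restrict Γ₀) := by
    simpa [sq] using (hInt u₁ u₁).restrict (s := Γ₀)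
  have hfvsq : Integrable (fun s => (tr v s) ^ 2) (μ.restrict Γ₀) := by
    simpa [sq] using (hInt v v).restrict (s := Γ₀)
  have hf1fv : Integrable (fun s => tr u₁ s * tr v s) (μ.restrict Γ₀) :=
    (hInt u₁ v).restrict (s := Γ₀)
  -- nonnegativity of square integrals
  have hI1 : 0 ≤ ∫ s in Γ₀, (tr u₁ s) ^ 2 ∂μ := integral_nonneg fun s => sq_nonneg _
  have hIv : 0 ≤ ∫ s in Γ₀, (tr v s) ^ 2 ∂μ := integral_nonneg fun s => sq_nonneg _
  have hN₁sq : N₁ ^ 2 = ∫ s in Γ₀, (tr u₁ s) ^ 2 ∂μ := Real.sq_sqrt hI1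
  have hNvsq : Nv ^ 2 = ∫ s in Γ₀, (tr v s) ^ 2 ∂μ := Real.sq_sqrt hIv
  have hN₁0 : 0 ≤ N₁ := Real.sqrt_nonneg _
  have hNv0 : 0 ≤ Nv := Real.sqrt_nonneg _
  -- Cauchy-Schwarz
  have hCS : ∫ s in Γ₀, |tr u₁ s| * |tr v s| ∂μ ≤ N₁ * Nv :=
    cs_aux (hTrMeas u₁).aestronglyMeasurable (hTrMeas v).aestronglyMeasurable hf1sq hfvsq
  -- energy identity
  have key : ∫ s, (γ₂ s - γ₁ s) * (tr u₁ s * tr v s) ∂μ =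
      (∫ s, γ₂ s * (tr u₂ s * tr v s) ∂μ + ∫ s, γ₂ s * (tr v s * tr v s) ∂μ) -
        ∫ s, γ₁ s * (tr u₁ s * tr v s) ∂μ := by
    have hadd : ∫ s, (γ₂ s * (tr u₂ s * tr v s) + γ₂ s * (tr v s * tr v s)) ∂μ =
        ∫ s, γ₂ s * (tr u₂ s * tr v s) ∂μ + ∫ s, γ₂ s * (tr v s * tr v s) ∂μ :=
      integral_add (hInt₂ u₂ v) (hInt₂ v v)
    have hsub' : ∫ s, (γ₂ s * (tr u₂ s * tr v s) + γ₂ s * (tr v s * tr v s)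
          - γ₁ s * (tr u₁ s * tr v s)) ∂μ =
        ∫ s, (γ₂ s * (tr u₂ s * tr v s) + γ₂ s * (tr v s * tr v s)) ∂μ -
          ∫ s, γ₁ s * (tr u₁ s * tr v s) ∂μ :=
      integral_sub ((hInt₂ u₂ v).add (hInt₂ v v)) (hInt₁ u₁ v)
    have h0 : ∫ s, (γ₂ s - γ₁ s) * (tr u₁ s * tr v s) ∂μ =
        ∫ s, (γ₂ s * (tr u₂ s * tr v s) + γ₂ s * (tr v s * tr v s)
          - γ₁ s * (tr u₁ s * tr v s)) ∂μ := by
      apply integral_congr_ae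
      filter_upwards with s
      rw [htv s]; ring
    rw [h0, hsub', hadd]
  have hBvv : B v v = B u₁ v - B u₂ v := by
    simp [hvdef, map_sub]
    ring
  have energy : B v v + ∫ s, γ₂ s * (tr v s * tr v s) ∂μ =
      ∫ s, (γ₂ s - γ₁ s) * (tr u₁ s * tr v s) ∂μ := by
    have e1 := hu₁ v
    have e2 := hu₂ v
    rw [key, hBvv]
    linarith
  -- localization to Γ₀
  have hloc : ∫ s, (γ₂ s - γ₁ s) * (tr u₁ s * tr v s) ∂μ =
      ∫ s in Γ₀, (γ₂ s - γ₁ s) * (tr u₁ s * tr v s) ∂μ := by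
    rw [← integral_indicator hΓ₀meas]
    apply integral_congr_ae
    filter_upwards [hEq] with s hs
    by_cases hsΓ : s ∈ Γ₀
    · rw [Set.indicator_of_mem hsΓ]
    · rw [Set.indicator_of_notMem hsΓ, hs hsΓ]
      ring
  -- lower bound
  have hnonneg : 0 ≤ᵐ[μ] fun s => γ₂ s * (tr v s * tr v s) := by
    filter_upwards [hγ₂lb] with s hs
    exact mul_nonneg (by linarith) (mul_self_nonneg _)
  have hset : ∫ s in Γ₀, γ₂ s * (tr v s * tr v s) ∂μ ≤ ∫ s, γ₂ s * (tr v s * tr v s) ∂μ :=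
    setIntegral_le_integral (hInt₂ v v) hnonneg
  have hClower : c * ∫ s in Γ₀, (tr v s) ^ 2 ∂μ ≤ ∫ s in Γ₀, γ₂ s * (tr v s * tr v s) ∂μ := by
    rw [← integral_const_mul]
    apply integral_mono_ae (hfvsq.const_mul c) ((hInt₂ v v).restrict (s := Γ₀))
    filter_upwards [hcae] with s hs
    rw [sq]
    exact mul_le_mul_of_nonneg_right hs (mul_self_nonneg _)
  -- upper bound
  have hIabs : Integrable (fun s => |γ₁ s - γ₂ s| * (|tr u₁ s| * |tr v s|)) (μ.restrict Γ₀) := by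
    have h0 : Integrable (fun s => (γ₁ s - γ₂ s) * (tr u₁ s * tr v s)) (μ.restrict Γ₀) := by
      have := ((hInt₁ u₁ v).sub (hInt₂ u₁ v)).restrict (s := Γ₀)
      apply this.congr
      filter_upwards with s
      simp only [Pi.sub_apply]
      ring
    exact h0.abs.congr (Filter.Eventually.of_forall fun s => by simp [abs_mul])
  have hDa : ∫ s in Γ₀, (γ₂ s - γ₁ s) * (tr u₁ s * tr v s) ∂μ ≤
      ∫ s in Γ₀, |γ₁ s - γ₂ s| * (|tr u₁ s| * |tr v s|) ∂μ := by
    have h0 : Integrable (fun s => (γ₂ s - γ₁ s) * (tr u₁ s * tr v s)) (μ.restrict Γ₀) := by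
      have := ((hInt₂ u₁ v).sub (hInt₁ u₁ v)).restrict (s := Γ₀)
      apply this.congr
      filter_upwards with s
      simp only [Pi.sub_apply]
      ring
    apply integral_mono_ae h0 hIabs
    filter_upwards with s
    calc (γ₂ s - γ₁ s) * (tr u₁ s * tr v s) ≤ |(γ₂ s - γ₁ s) * (tr u₁ s * tr v s)| := le_abs_self _
      _ = |γ₁ s - γ₂ s| * (|tr u₁ s| * |tr v s|) := by rw [abs_mul, abs_mul, abs_sub_comm]
  have hIabs2 : Integrable (fun s => |tr u₁ s| * |tr v s|) (μ.restrict Γ₀) :=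
    hf1fv.abs.congr (Filter.Eventually.of_forall fun s => by simp [abs_mul])
  have hDb : ∫ s in Γ₀, |γ₁ s - γ₂ s| * (|tr u₁ s| * |tr v s|) ∂μ ≤
      δ * ∫ s in Γ₀, |tr u₁ s| * |tr v s| ∂μ := by
    rw [← integral_const_mul]
    apply integral_mono_ae hIabs (hIabs2.const_mul δ)
    filter_upwards [hδae] with s hs
    exact mul_le_mul_of_nonneg_right hs (mul_nonneg (abs_nonneg _) (abs_nonneg _))
  -- combine: c * Nv² ≤ δ * (N₁ * Nv)
  have hchain : c * (Nv * Nv) ≤ δ * (N₁ * Nv) := by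
    have h1 : c * ∫ s in Γ₀, (tr v s) ^ 2 ∂μ ≤ δ * (N₁ * Nv) := by
      calc c * ∫ s in Γ₀, (tr v s) ^ 2 ∂μ
          ≤ ∫ s in Γ₀, γ₂ s * (tr v s * tr v s) ∂μ := hClower
        _ ≤ ∫ s, γ₂ s * (tr v s * tr v s) ∂μ := hset
        _ ≤ B v v + ∫ s, γ₂ s * (tr v s * tr v s) ∂μ := by linarith [hBpos v]
        _ = ∫ s in Γ₀, (γ₂ s - γ₁ s) * (tr u₁ s * tr v s) ∂μ := by rw [energy, hloc]
        _ ≤ ∫ s in Γ₀, |γ₁ s - γ₂ s| * (|tr u₁ s| * |tr v s|) ∂μ := hDa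
        _ ≤ δ * ∫ s in Γ₀, |tr u₁ s| * |tr v s| ∂μ := hDb
        _ ≤ δ * (N₁ * Nv) := mul_le_mul_of_nonneg_left hCS hδ0
    calc c * (Nv * Nv) = c * ∫ s in Γ₀, (tr v s) ^ 2 ∂μ := by rw [← hNvsq]; ring
      _ ≤ δ * (N₁ * Nv) := h1
  -- deduce Nv ≤ δ/c * N₁
  have hNvle : Nv ≤ δ / c * N₁ := by
    rcases eq_or_lt_of_le hNv0 with h | h
    · rw [← h]
      exact mul_nonneg (div_nonneg hδ0 hcpos.le) hN₁0
    · have h2 : c * Nv ≤ δ * N₁ := by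
        have e1 : (c * Nv) * Nv = c * (Nv * Nv) := by ring
        have e2 : (δ * N₁) * Nv = δ * (N₁ * Nv) := by ring
        refine le_of_mul_le_mul_right ?_ h
        rw [e1, e2]
        exact hchain
      rw [div_mul_eq_mul_div, le_div_iff₀ hcpos]
      linarith
  -- triangle inequality: N₂ ≤ N₁ + Nv
  have habsint : |∫ s in Γ₀, tr u₁ s * tr v s ∂μ| ≤ N₁ * Nv := by
    have h1 : |∫ s in Γ₀, tr u₁ s * tr v s ∂μ| ≤ ∫ s in Γ₀, |tr u₁ s| * |tr v s| ∂μ := by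
      have := norm_integral_le_integral_norm (μ := μ.restrict Γ₀) (fun s => tr u₁ s * tr v s)
      simpa [Real.norm_eq_abs, abs_mul] using this
    exact h1.trans hCS
  have hexpand : ∫ s in Γ₀, (tr u₂ s) ^ 2 ∂μ =
      (∫ s in Γ₀, (tr u₁ s) ^ 2 ∂μ - 2 * ∫ s in Γ₀, tr u₁ s * tr v s ∂μ) +
        ∫ s in Γ₀, (tr v s) ^ 2 ∂μ := by
    have hsub : Integrable (fun s => tr u₁ s ^ 2 - 2 * (tr u₁ s * tr v s)) (μ.restrict Γ₀) :=
      hf1sq.sub (hf1fv.const_mul 2)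
    have h1 : ∫ s in Γ₀, (tr u₁ s ^ 2 - 2 * (tr u₁ s * tr v s) + tr v s ^ 2) ∂μ =
        (∫ s in Γ₀, (tr u₁ s ^ 2 - 2 * (tr u₁ s * tr v s)) ∂μ) +
          ∫ s in Γ₀, tr v s ^ 2 ∂μ := integral_add hsub hfvsq
    have h2 : ∫ s in Γ₀, (tr u₁ s ^ 2 - 2 * (tr u₁ s * tr v s)) ∂μ =
        ∫ s in Γ₀, tr u₁ s ^ 2 ∂μ - ∫ s in Γ₀, 2 * (tr u₁ s * tr v s) ∂μ :=
      integral_sub hf1sq (hf1fv.const_mul 2)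
    have h3 : ∫ s in Γ₀, 2 * (tr u₁ s * tr v s) ∂μ = 2 * ∫ s in Γ₀, tr u₁ s * tr v s ∂μ :=
      integral_const_mul 2 _
    have h0 : ∫ s in Γ₀, (tr u₂ s) ^ 2 ∂μ =
        ∫ s in Γ₀, (tr u₁ s ^ 2 - 2 * (tr u₁ s * tr v s) + tr v s ^ 2) ∂μ := by
      apply integral_congr_ae
      filter_upwards with s
      rw [htv s]; ring
    rw [h0, h1, h2, h3]
  have hN₂le : N₂ ≤ N₁ + Nv := by
    have hsqle : ∫ s in Γ₀, (tr u₂ s) ^ 2 ∂μ ≤ (N₁ + Nv) ^ 2 := by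
      have habs := abs_le.mp habsint
      have hring : (N₁ + Nv) ^ 2 = N₁ ^ 2 + 2 * (N₁ * Nv) + Nv ^ 2 := by ring
      rw [hexpand, hring, hN₁sq, hNvsq]
      linarith [habs.1]
    calc N₂ ≤ Real.sqrt ((N₁ + Nv) ^ 2) := Real.sqrt_le_sqrt hsqle
      _ = N₁ + Nv := Real.sqrt_sq (by linarith)
  -- finish
  have hfin : (1 + δ / c) * N₁ = N₁ + δ / c * N₁ := by ring
  rw [hfin]
  linarith
end

section
/- Let Ω ⊂ ℝ^d be a bounded Lipschitz domain and Γ a Lipschitz interface inside Ω. For each γ ∈ L^∞₊(Γ) and g ∈ L²(∂Ω), let u_γ^{(g)} ∈ H¹(Ω) be the unique solution of ∫_Ω ∇u·∇w dx + ∫_Γ γ u w ds = ∫_{∂Ω} g w ds for all w ∈ H¹(Ω), and let Λ(γ) : L²(∂Ω) → L²(∂Ω), g ↦ u_γ^{(g)}|_{∂Ω}. Then for all g ∈ L²(∂Ω) and all γ₁, γ₂ ∈ L^∞₊(Γ): ∫_{∂Ω} g (Λ(γ₂) − Λ(γ₁)) g ds ≥ −∫_Γ (γ₂ − γ₁) |u_{γ₁}^{(g)}|²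 ds, i.e. the Neumann-to-Dirichlet map is convex and anti-monotone with derivative given by the quadratic form δ ↦ −∫_Γ δ |u_γ^{(g)}|² ds. -/
open MeasureTheory

/-- Abstract formulation: `V` plays the role of `H¹(Ω)`, `B` the Dirichlet form
`∫_Ω ∇u·∇w dx`, `tr` the trace onto the interface `Γ`, and `ℓ` the functional
`w ↦ ∫_{∂Ω} g w ds`. Since `∫_{∂Ω} g (Λ(γ) g) ds = ℓ(u_γ)` (take `w = u_γ` in the
variational formulation), the monotonicity estimate
`∫_{∂Ω} g (Λ(γ₂) − Λ(γ₁)) g ds ≥ −∫_Γ (γ₂−γ₁)|u_{γ₁}|² ds` reads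
`ℓ(u₂) − ℓ(u₁) ≥ −∫_Γ (γ₂−γ₁) (tr u₁)² dμ`. -/
theorem stmt_18
    {V : Type*} [AddCommGroup V] [Module ℝ V]
    {Γ : Type*} [MeasurableSpace Γ] (μ : Measure Γ)
    (B : LinearMap.BilinForm ℝ V)
    (hBsymm : ∀ u w : V, B u w = B w u) (hBpos : ∀ u : V, 0 ≤ B u u)
    (tr : V →ₗ[ℝ] Γ → ℝ) (hTrMeas : ∀ v : V, Measurable (tr v))
    (ℓ : V →ₗ[ℝ] ℝ)
    (γ₁ γ₂ : Γ → ℝ) (hγ₁meas : Measurable γ₁) (hγ₂meas : Measurable γ₂)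
    (a₁ a₂ b₁ b₂ : ℝ) (ha₁ : 0 < a₁) (ha₂ : 0 < a₂)
    (hγ₁lb : ∀ᵐ s ∂μ, a₁ ≤ γ₁ s) (hγ₂lb : ∀ᵐ s ∂μ, a₂ ≤ γ₂ s)
    (hγ₁ub : ∀ᵐ s ∂μ, γ₁ s ≤ b₁) (hγ₂ub : ∀ᵐ s ∂μ, γ₂ s ≤ b₂)
    (hInt : ∀ v w : V, Integrable (fun s => tr v s * tr w s) μ)
    (hInt₁ : ∀ v w : V, Integrable (fun s => γ₁ s * (tr v s * tr w s)) μ)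
    (hInt₂ : ∀ v w : V, Integrable (fun s => γ₂ s * (tr v s * tr w s)) μ)
    (u₁ u₂ : V)
    (hu₁ : ∀ w : V, B u₁ w + ∫ s, γ₁ s * (tr u₁ s * tr w s) ∂μ = ℓ w)
    (hu₂ : ∀ w : V, B u₂ w + ∫ s, γ₂ s * (tr u₂ s * tr w s) ∂μ = ℓ w) :
    -(∫ s, (γ₂ s - γ₁ s) * (tr u₁ s) ^ 2 ∂μ) ≤ ℓ u₂ - ℓ u₁ := by
  set e := u₁ - u₂ with he
  -- abbreviations
  have hJ21 : (∫ s, γ₂ s * (tr u₂ s * tr u₁ s) ∂μ)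
      = ∫ s, γ₂ s * (tr u₁ s * tr u₂ s) ∂μ := by
    congr 1; funext s; ring
  -- expand ∫ (γ₂ - γ₁) (tr u₁)^2
  have hdiff : (∫ s, (γ₂ s - γ₁ s) * (tr u₁ s) ^ 2 ∂μ)
      = (∫ s, γ₂ s * (tr u₁ s * tr u₁ s) ∂μ) - ∫ s, γ₁ s * (tr u₁ s * tr u₁ s) ∂μ := by
    rw [← integral_sub (hInt₂ u₁ u₁) (hInt₁ u₁ u₁)]
    congr 1; funext s; ring
  -- expand ∫ γ₂ (tr e)^2
  have htre : ∀ s, tr e s = tr u₁ s - tr u₂ s := by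
    intro s; rw [he, map_sub]; rfl
  have hQ : (∫ s, γ₂ s * (tr e s * tr e s) ∂μ)
      = (∫ s, γ₂ s * (tr u₁ s * tr u₁ s) ∂μ)
        - 2 * (∫ s, γ₂ s * (tr u₁ s * tr u₂ s) ∂μ)
        + ∫ s, γ₂ s * (tr u₂ s * tr u₂ s) ∂μ := by
    have h1 : (fun s => γ₂ s * (tr e s * tr e s))
        = fun s => (γ₂ s * (tr u₁ s * tr u₁ s) - γ₂ s * (tr u₁ s * tr u₂ s))
            - (γ₂ s * (tr u₁ s * tr u₂ s) - γ₂ s * (tr u₂ s * tr u₂ s)) := by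
      funext s; rw [htre s]; ring
    have i1 : Integrable (fun s => γ₂ s * (tr u₁ s * tr u₁ s)
        - γ₂ s * (tr u₁ s * tr u₂ s)) μ := (hInt₂ u₁ u₁).sub (hInt₂ u₁ u₂)
    have i2 : Integrable (fun s => γ₂ s * (tr u₁ s * tr u₂ s)
        - γ₂ s * (tr u₂ s * tr u₂ s)) μ := (hInt₂ u₁ u₂).sub (hInt₂ u₂ u₂)
    rw [h1, integral_sub i1 i2,
      integral_sub (hInt₂ u₁ u₁) (hInt₂ u₁ u₂),
      integral_sub (hInt₂ u₁ u₂) (hInt₂ u₂ u₂)]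
    ring
  -- positivity
  have hQpos : 0 ≤ ∫ s, γ₂ s * (tr e s * tr e s) ∂μ := by
    apply integral_nonneg_of_ae
    filter_upwards [hγ₂lb] with s hs
    exact mul_nonneg (le_trans ha₂.le hs) (mul_self_nonneg _)
  have hBee : B e e = B u₁ u₁ - 2 * B u₁ u₂ + B u₂ u₂ := by
    rw [he]
    simp only [map_sub, LinearMap.sub_apply]
    rw [hBsymm u₂ u₁]; ring
  have hP : 0 ≤ B u₁ u₁ - 2 * B u₁ u₂ + B u₂ u₂
      + ((∫ s, γ₂ s * (tr u₁ s * tr u₁ s) ∂μ)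
        - 2 * (∫ s, γ₂ s * (tr u₁ s * tr u₂ s) ∂μ)
        + ∫ s, γ₂ s * (tr u₂ s * tr u₂ s) ∂μ) := by
    rw [← hQ, ← hBee]
    exact add_nonneg (hBpos e) hQpos
  -- equations
  have F1 := hu₁ u₁
  have F3 := hu₂ u₁
  have F4 := hu₂ u₂
  rw [hBsymm u₂ u₁, hJ21] at F3
  rw [hdiff]
  linarith [hP, F1, F3, F4]
end

section
/- Let H, H₀, H₁, …, H_K be Hilbert spaces, A₀ : H₀ → H and A_k : H_k → H (k = 1,…,K) bounded linear operators. If there exists a constant C > 0 such that ‖A₀* g‖² ≤ C ∑_{k=1}^K ‖A_k* g‖² for all g ∈ H, then Range(A₀) ⊆ Range(A₁) + ⋯ + Range(A_K). Equivalently (contrapositive): if Range(A₀) ⊄ Range(A₁)+⋯+Range(A_K), then for every C > 0 there exists g ∈ H with ‖A₀* g‖² > C ∑_k ‖A_k* g‖². -/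
open ContinuousLinearMap
open RealInnerProductSpace

theorem stmt_19
    {H H₀ : Type*}
    [NormedAddCommGroup H] [InnerProductSpace ℝ H] [CompleteSpace H]
    [NormedAddCommGroup H₀] [InnerProductSpace ℝ H₀] [CompleteSpace H₀]
    {K : ℕ} {Hk : Fin K → Type*}
    [∀ k, NormedAddCommGroup (Hk k)] [∀ k, InnerProductSpace ℝ (Hk k)]
    [∀ k, CompleteSpace (Hk k)]
    (A₀ : H₀ →L[ℝ] H) (A : ∀ k, Hk k →L[ℝ] H)
    (C : ℝ) (hC : 0 < C)
    (h : ∀ g : H, ‖adjoint A₀ g‖ ^ 2 ≤ C * ∑ k, ‖adjoint (A k) g‖ ^ 2) :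
    ∀ y ∈ Set.range A₀, ∃ f : ∀ k, Hk k, y = ∑ k, A k (f k) := by
  classical
  rintro y ⟨x₀, rfl⟩
  let T : H →L[ℝ] PiLp 2 Hk :=
    (PiLp.continuousLinearEquiv 2 ℝ Hk).symm.toContinuousLinearMap.comp
      (ContinuousLinearMap.pi fun k => adjoint (A k))
  have hTapp : ∀ (g : H) (k : Fin K), T g k = adjoint (A k) g := fun g k => rfl
  have hTnorm : ∀ g : H, ‖T g‖ ^ 2 = ∑ k, ‖adjoint (A k) g‖ ^ 2 := by
    intro g
    rw [PiLp.norm_sq_eq_of_L2]; rfl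
  have key : ∀ g g' : H, T g = T g' → ⟪A₀ x₀, g⟫ = ⟪A₀ x₀, g'⟫ := by
    intro g g' hgg'
    have hT0 : T (g - g') = 0 := by rw [map_sub, hgg', sub_self]
    have hsum : ∑ k, ‖adjoint (A k) (g - g')‖ ^ 2 = 0 := by
      rw [← hTnorm, hT0, norm_zero]; ring
    have h0 : adjoint A₀ (g - g') = 0 := by
      have := h (g - g')
      rw [hsum, mul_zero] at this
      have := le_antisymm this (by positivity)
      have hn : ‖adjoint A₀ (g - g')‖ = 0 := by
        have := pow_eq_zero_iff (n := 2) (by norm_num) |>.mp this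
        exact this
      exact norm_eq_zero.mp hn
    have : ⟪A₀ x₀, g - g'⟫ = 0 := by
      rw [← ContinuousLinearMap.adjoint_inner_right, h0, inner_zero_right]
    rw [inner_sub_right] at this
    linarith
  have bound : ∀ g : H, |⟪A₀ x₀, g⟫| ≤ ‖x₀‖ * Real.sqrt C * ‖T g‖ := by
    intro g
    have h1 : ⟪A₀ x₀, g⟫ = ⟪x₀, adjoint A₀ g⟫ :=
      (ContinuousLinearMap.adjoint_inner_right A₀ x₀ g).symm
    have h2 : |⟪x₀, adjoint A₀ g⟫| ≤ ‖x₀‖ * ‖adjoint A₀ g‖ := abs_real_inner_le_norm _ _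
    have h3 : ‖adjoint A₀ g‖ ≤ Real.sqrt C * ‖T g‖ := by
      have := h g
      rw [← hTnorm] at this
      calc ‖adjoint A₀ g‖ = Real.sqrt (‖adjoint A₀ g‖ ^ 2) := by
            rw [Real.sqrt_sq (norm_nonneg _)]
        _ ≤ Real.sqrt (C * ‖T g‖ ^ 2) := Real.sqrt_le_sqrt this
        _ = Real.sqrt C * ‖T g‖ := by
            rw [Real.sqrt_mul hC.le, Real.sqrt_sq (norm_nonneg _)]
    calc |⟪A₀ x₀, g⟫| ≤ ‖x₀‖ * ‖adjoint A₀ g‖ := by rw [h1]; exact h2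
      _ ≤ ‖x₀‖ * (Real.sqrt C * ‖T g‖) := by
          exact mul_le_mul_of_nonneg_left h3 (norm_nonneg _)
      _ = ‖x₀‖ * Real.sqrt C * ‖T g‖ := by ring
  set p : Submodule ℝ (PiLp 2 Hk) := LinearMap.range (T : H →ₗ[ℝ] PiLp 2 Hk) with hp
  have hmem : ∀ g : H, T g ∈ p := fun g => ⟨g, rfl⟩
  let pick : p → H := fun z => z.2.choose
  have hpick : ∀ z : p, T (pick z) = (z : PiLp 2 Hk) := fun z => z.2.choose_spec
  let ℓ : p →ₗ[ℝ] ℝ :=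
    { toFun := fun z => ⟪A₀ x₀, pick z⟫
      map_add' := by
        intro a b
        have : T (pick (a + b)) = T (pick a + pick b) := by
          rw [map_add, hpick, hpick, hpick]; rfl
        show ⟪A₀ x₀, pick (a + b)⟫ = ⟪A₀ x₀, pick a⟫ + ⟪A₀ x₀, pick b⟫
        rw [key _ _ this, inner_add_right]
      map_smul' := by
        intro c a
        have : T (pick (c • a)) = T (c • pick a) := by
          rw [map_smul, hpick, hpick]; rfl
        show ⟪A₀ x₀, pick (c • a)⟫ = (RingHom.id ℝ) c • ⟪A₀ x₀, pick a⟫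
        rw [key _ _ this, real_inner_smul_right]
        rfl }
  have hℓ : ∀ z : p, ‖ℓ z‖ ≤ ‖x₀‖ * Real.sqrt C * ‖z‖ := by
    intro z
    have : ‖(z : PiLp 2 Hk)‖ = ‖T (pick z)‖ := by rw [hpick]
    calc ‖ℓ z‖ = |⟪A₀ x₀, pick z⟫| := rfl
      _ ≤ ‖x₀‖ * Real.sqrt C * ‖T (pick z)‖ := bound _
      _ = ‖x₀‖ * Real.sqrt C * ‖z‖ := by rw [← this]; rfl
  let L : p →L[ℝ] ℝ := ℓ.mkContinuous (‖x₀‖ * Real.sqrt C) hℓ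
  haveI : CompleteSpace (PiLp 2 Hk) := inferInstance
  obtain ⟨G, hG, -⟩ := exists_extension_norm_eq p L
  set f₀ : PiLp 2 Hk := (InnerProductSpace.toDual ℝ (PiLp 2 Hk)).symm G with hf₀
  refine ⟨fun k => f₀ k, ?_⟩
  apply ext_inner_right ℝ
  intro v
  have h4 : ⟪(∑ k, A k (f₀ k)), v⟫ = ⟪f₀, T v⟫ := by
    rw [sum_inner, PiLp.inner_apply]
    refine Finset.sum_congr rfl fun k _ => ?_
    rw [← ContinuousLinearMap.adjoint_inner_right]
    rfl
  have h5 : ⟪f₀, T v⟫ = G (T v) := by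
    rw [hf₀]; exact InnerProductSpace.toDual_symm_apply
  have h6 : G (T v) = L ⟨T v, hmem v⟩ := (hG ⟨T v, hmem v⟩)
  have h7 : L ⟨T v, hmem v⟩ = ⟪A₀ x₀, v⟫ := by
    have : T (pick ⟨T v, hmem v⟩) = T v := hpick _
    exact key _ _ this
  rw [h4, h5, h6, h7]
end
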